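/- arXiv:2106.10324 — 6 statements merged into one kernel-verified Lean document; each statement's English description precedes it below -/
import Mathlib

section
/- (Danskin's theorem.) Let Δ ⊆ ℝ^k be a nonempty compact set and let f : ℝ^n × ℝ^k → ℝ be continuous and continuously differentiable in its first argument w. Suppose that for every w ∈ ℝ^n the function δ ↦ f(w, δ) has a unique maximizer δ*(w) over Δ. Then the value function F(w) := max_{δ ∈ Δ} f(w, δ) is differentiable on ℝ^n and its gradient satisfies ∇F(w) = ∇_w f(w, δ*(w)) for every w. -/
open InnerProductSpace Metric Set


/-- **Danskin's theorem.** Let `Δ ⊆ ℝ^k` be a nonempty compact set and let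
`f : ℝ^n × ℝ^k → ℝ` be continuous and continuously differentiable in its first argument `w`
(with gradient `G w δ` with respect to `w`, depending continuously on `(w, δ)`). If for every
`w` the function `δ ↦ f w δ` has a unique maximizer `δ*(w)` over `Δ`, then the value function
`F(w) := max_{δ ∈ Δ} f w δ` is differentiable with `∇F(w) = ∇_w f(w, δ*(w))`. -/
theorem stmt2 (n k : ℕ)
    (Δ : Set (EuclideanSpace ℝ (Fin k))) (hΔ_ne : Δ.Nonempty) (hΔ_cpt : IsCompact Δ)
    (f : EuclideanSpace ℝ (Fin n) → EuclideanSpace ℝ (Fin k) → ℝ)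
    (hf_cont : Continuous fun p : EuclideanSpace ℝ (Fin n) × EuclideanSpace ℝ (Fin k) =>
      f p.1 p.2)
    (G : EuclideanSpace ℝ (Fin n) → EuclideanSpace ℝ (Fin k) → EuclideanSpace ℝ (Fin n))
    (hG : ∀ w δ, HasGradientAt (fun w' => f w' δ) (G w δ) w)
    (hG_cont : Continuous fun p : EuclideanSpace ℝ (Fin n) × EuclideanSpace ℝ (Fin k) =>
      G p.1 p.2)
    (δstar : EuclideanSpace ℝ (Fin n) → EuclideanSpace ℝ (Fin k))
    (hδstar_mem : ∀ w, δstar w ∈ Δ)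
    (hδstar_max : ∀ w, ∀ δ ∈ Δ, δ ≠ δstar w → f w δ < f w (δstar w))
    (F : EuclideanSpace ℝ (Fin n) → ℝ)
    (hF : ∀ w, F w = sSup ((fun δ => f w δ) '' Δ)) :
    ∀ w, HasGradientAt F (G w (δstar w)) w := by
  have hfw_cont : ∀ w', Continuous (f w') := fun w' =>
    hf_cont.comp (Continuous.prodMk continuous_const continuous_id)
  have hmax : ∀ w', ∀ δ ∈ Δ, f w' δ ≤ f w' (δstar w') := by
    intro w' δ hδ
    by_cases h : δ = δstar w'
    · rw [h]
    · exact (hδstar_max w' δ hδ h).le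
  have hbdd : ∀ w', BddAbove ((f w') '' Δ) := fun w' =>
    ((hΔ_cpt.image (hfw_cont w')).bddAbove)
  have hFval : ∀ w', F w' = f w' (δstar w') := by
    intro w'
    rw [hF]
    refine le_antisymm (csSup_le (hΔ_ne.image _) ?_) (le_csSup (hbdd w') ⟨_, hδstar_mem w', rfl⟩)
    rintro y ⟨δ, hδ, rfl⟩; exact hmax w' δ hδ
  have hFub : ∀ w', ∀ δ ∈ Δ, f w' δ ≤ F w' := by
    intro w' δ hδ; rw [hFval]; exact hmax w' δ hδ
  -- continuity of the argmax
  have hargmax : ∀ w, ∀ U : Set (EuclideanSpace ℝ (Fin k)), IsOpen U → δstar w ∈ U →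
      ∃ r > 0, ∀ w', dist w' w < r → δstar w' ∈ U := by
    intro w U hU hwU
    by_cases hKne : (Δ \ U).Nonempty
    · obtain ⟨δ₀, hδ₀K, hδ₀max⟩ := (hΔ_cpt.diff hU).exists_isMaxOn hKne
        ((hfw_cont w).continuousOn)
      have hδ₀Δ : δ₀ ∈ Δ := hδ₀K.1
      have hδ₀ne : δ₀ ≠ δstar w := fun h => hδ₀K.2 (h ▸ hwU)
      set c : ℝ := f w (δstar w) - f w δ₀ with hc
      have hc_pos : 0 < c := sub_pos.mpr (hδstar_max w δ₀ hδ₀Δ hδ₀ne)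
      -- uniform continuity on (closedBall w 1) ×ˢ Δ
      have hScpt : IsCompact ((closedBall w 1) ×ˢ Δ) :=
        (isCompact_closedBall w 1).prod hΔ_cpt
      have huc := hScpt.uniformContinuousOn_of_continuous hf_cont.continuousOn
      rw [Metric.uniformContinuousOn_iff] at huc
      obtain ⟨d, hd_pos, hd⟩ := huc (c / 3) (by linarith)
      refine ⟨min d 1, lt_min hd_pos one_pos, fun w' hw' => ?_⟩
      have hw'd : dist w' w < d := lt_of_lt_of_le hw' (min_le_left _ _)
      have hw'1 : w' ∈ closedBall w 1 := le_of_lt (lt_of_lt_of_le hw' (min_le_right _ _))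
      have hwb : w ∈ closedBall w 1 := mem_closedBall_self zero_le_one
      have key : ∀ δ ∈ Δ, |f w' δ - f w δ| < c / 3 := by
        intro δ hδ
        have := hd (w', δ) (Set.mk_mem_prod hw'1 hδ) (w, δ) (Set.mk_mem_prod hwb hδ) ?_
        · rwa [Real.dist_eq] at this
        · rw [Prod.dist_eq]; simp only [dist_self]; exact max_lt hw'd hd_pos
      by_contra hcon
      have hK : δstar w' ∈ Δ \ U := ⟨hδstar_mem w', hcon⟩
      have h1 : f w' (δstar w') < f w δ₀ + c / 3 := by
        have := key (δstar w') (hδstar_mem w')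
        have h2 := hδ₀max hK
        have := abs_lt.mp this
        simp only [isMaxOn_iff] at hδ₀max
        linarith [hδ₀max (δstar w') hK]
      have h3 : f w (δstar w) - c / 3 < f w' (δstar w) := by
        have := abs_lt.mp (key (δstar w) (hδstar_mem w))
        linarith
      have h4 : f w' (δstar w) ≤ f w' (δstar w') := hmax w' _ (hδstar_mem w)
      have : f w (δstar w) - c / 3 < f w δ₀ + c / 3 := by linarith
      rw [hc] at this
      linarith
    · refine ⟨1, one_pos, fun w' _ => ?_⟩
      rw [Set.not_nonempty_iff_eq_empty, Set.diff_eq_empty] at hKne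
      exact hKne (hδstar_mem w')
  -- main argument
  intro w
  rw [hasGradientAt_iff_hasFDerivAt, hasFDerivAt_iff_isLittleO_nhds_zero, Asymptotics.isLittleO_iff]
  intro ε hε
  set g := G w (δstar w) with hgdef
  -- find neighborhoods where G is ε-close to g
  have hGat : ContinuousAt (fun p : EuclideanSpace ℝ (Fin n) × EuclideanSpace ℝ (Fin k) =>
      G p.1 p.2) (w, δstar w) := hG_cont.continuousAt
  have hpre : IsOpen ((fun p : EuclideanSpace ℝ (Fin n) × EuclideanSpace ℝ (Fin k) =>
      G p.1 p.2) ⁻¹' (ball g ε)) := isOpen_ball.preimage hG_cont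
  have hmem : (w, δstar w) ∈ ((fun p : EuclideanSpace ℝ (Fin n) × EuclideanSpace ℝ (Fin k) =>
      G p.1 p.2) ⁻¹' (ball g ε)) := by
    simp [hgdef, mem_ball, hε]
  obtain ⟨s, t, hs, ht, hws, hwt, hst⟩ := isOpen_prod_iff.mp hpre w (δstar w) hmem
  obtain ⟨r₁, hr₁, hr₁s⟩ := Metric.isOpen_iff.mp hs w hws
  obtain ⟨r₂, hr₂, hr₂t⟩ := hargmax w t ht hwt
  set r := min r₁ r₂ with hr
  have hr_pos : 0 < r := lt_min hr₁ hr₂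
  have hGbound : ∀ x ∈ ball w r, ∀ δ ∈ t, ‖G x δ - g‖ ≤ ε := by
    intro x hx δ hδ
    have hxs : x ∈ s := hr₁s (mem_of_mem_of_subset hx (ball_subset_ball (min_le_left _ _)))
    have := hst (Set.mk_mem_prod hxs hδ)
    simp only [Set.mem_preimage, mem_ball, dist_eq_norm] at this
    exact this.le
  -- MVT estimate
  have hMVT : ∀ δ ∈ t, ∀ h : EuclideanSpace ℝ (Fin n), ‖h‖ < r →
      ‖f (w + h) δ - f w δ - inner ℝ g h‖ ≤ ε * ‖h‖ := by
    intro δ hδ h hh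
    have hwball : w ∈ ball w r := mem_ball_self hr_pos
    have hw'ball : w + h ∈ ball w r := by
      simp [mem_ball, dist_eq_norm, hh]
    have := (convex_ball w r).norm_image_sub_le_of_norm_hasFDerivWithin_le'
      (f := fun x => f x δ) (φ := (toDual ℝ (EuclideanSpace ℝ (Fin n))) g)
      (f' := fun x => (toDual ℝ (EuclideanSpace ℝ (Fin n))) (G x δ)) (C := ε)
      (fun x _ => (hG x δ).hasFDerivAt.hasFDerivWithinAt)
      (fun x hx => by
        rw [← map_sub, LinearIsometryEquiv.norm_map]
        exact hGbound x hx δ hδ)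
      hwball hw'ball
    simpa [toDual_apply_apply, add_sub_cancel_left] using this
  -- eventually
  filter_upwards [ball_mem_nhds (0 : EuclideanSpace ℝ (Fin n)) hr_pos] with h hh
  rw [mem_ball, dist_zero_right] at hh
  have hw'ball : dist (w + h) w < r₂ := by
    rw [dist_eq_norm, add_sub_cancel_left]
    exact lt_of_lt_of_le hh (min_le_right _ _)
  have hδt' : δstar (w + h) ∈ t := hr₂t (w + h) hw'ball
  have hδt : δstar w ∈ t := hwt
  have hlow := hMVT (δstar w) hδt h hh
  have hupp := hMVT (δstar (w + h)) hδt' h hh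
  have hFw : F w = f w (δstar w) := hFval w
  have hFw' : F (w + h) = f (w + h) (δstar (w + h)) := hFval (w + h)
  have hub1 : f (w + h) (δstar w) ≤ F (w + h) := hFub (w + h) _ (hδstar_mem w)
  have hub2 : f w (δstar (w + h)) ≤ F w := hFub w _ (hδstar_mem (w + h))
  rw [Real.norm_eq_abs, abs_le]
  rw [Real.norm_eq_abs, abs_le] at hlow hupp
  simp only [toDual_apply_apply]
  constructor
  · linarith [hlow.1]
  · linarith [hupp.2]
end

section
/- Let f : ℝ^n × ℝ^k → ℝ be differentiable with β-Lipschitz gradient on ℝ^n × ℝ^k (β > 0), and suppose that for every w ∈ ℝ^n the map δ ↦ f(w, δ) is μ-strongly concave (μ > 0). Let g : ℝ^k → ℝ be concave, and suppose that for every w the function δ ↦ f(w, δ) + g(δ) attains its maximum at a (necessarily unique) point δ*(w) ∈ ℝ^k. Then the map w ↦ δ*(w) is (β/μ)-Lipschitz: ‖δ*(w₁) − δ*(w₂)‖ ≤ (β/μ)‖w₁ − w₂‖ for all w₁, w₂ ∈ ℝ^n. -/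
open InnerProductSpace

lemma norm_combo_sq {E : Type*} [NormedAddCommGroup E] [InnerProductSpace ℝ E]
    (a b : E) (t : ℝ) :
    ‖(1 - t) • a + t • b‖ ^ 2
      = (1 - t) * ‖a‖ ^ 2 + t * ‖b‖ ^ 2 - t * (1 - t) * ‖a - b‖ ^ 2 := by
  have h : ∀ x : E, ‖x‖ ^ 2 = inner ℝ x x := fun x =>
    (real_inner_self_eq_norm_sq x).symm
  simp only [h, inner_add_add_self, inner_sub_sub_self, real_inner_smul_left,
    real_inner_smul_right, real_inner_comm a b]
  ring

/-- Quadratic growth at the maximizer for a strongly concave function. -/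
lemma quad_growth {E : Type*} [NormedAddCommGroup E] [InnerProductSpace ℝ E]
    (μ : ℝ) (hμ : 0 < μ) (F : E → ℝ)
    (hconc : ConcaveOn ℝ Set.univ (fun δ => F δ + μ / 2 * ‖δ‖ ^ 2))
    (b : E) (hmax : ∀ δ, F δ ≤ F b) (a : E) :
    F a ≤ F b - μ / 2 * ‖a - b‖ ^ 2 := by
  have key : ∀ t : ℝ, 0 < t → t ≤ 1 →
      F a + μ / 2 * (1 - t) * ‖a - b‖ ^ 2 ≤ F b := by
    intro t ht0 ht1
    have hcc := hconc.2 (Set.mem_univ b) (Set.mem_univ a)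
      (by linarith : (0:ℝ) ≤ 1 - t) (le_of_lt ht0) (by ring)
    simp only [smul_eq_mul] at hcc
    have hid := norm_combo_sq b a t
    have hAB : ‖b - a‖ = ‖a - b‖ := norm_sub_rev b a
    rw [hAB] at hid
    have hm := hmax ((1 - t) • b + t • a)
    rw [hid] at hcc
    nlinarith [hcc, hm, mul_pos ht0 ht0, ht0.le]
  have hε : ∀ ε : ℝ, 0 < ε → F a + μ / 2 * ‖a - b‖ ^ 2 ≤ F b + ε := by
    intro ε hε
    set c : ℝ := μ / 2 * ‖a - b‖ ^ 2 with hc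
    have hc0 : 0 ≤ c := by positivity
    set t : ℝ := min 1 (ε / (c + 1)) with htdef
    have ht0 : 0 < t := lt_min one_pos (by positivity)
    have ht1 : t ≤ 1 := min_le_left _ _
    have := key t ht0 ht1
    have htc : t * c ≤ ε := by
      have h1 : t ≤ ε / (c + 1) := min_le_right _ _
      have h2 : t * c ≤ (ε / (c + 1)) * c :=
        mul_le_mul_of_nonneg_right h1 hc0
      have h3 : (ε / (c + 1)) * c ≤ ε := by
        rw [div_mul_eq_mul_div, div_le_iff₀ (by linarith)]
        nlinarith
      linarith
    nlinarith [this]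
  by_contra h
  push_neg at h
  have := hε ((F a + μ / 2 * ‖a - b‖ ^ 2 - F b) / 2) (by linarith)
  linarith

/-- Mean value bound for the difference of a function at two base points along a
common direction, for a function with Lipschitz gradient. -/
lemma diff_bound {H : Type*} [NormedAddCommGroup H] [InnerProductSpace ℝ H]
    [CompleteSpace H] (f : H → ℝ) (G : H → H)
    (hG : ∀ p, HasGradientAt f (G p) p)
    (β : ℝ) (hG_lip : ∀ p q, ‖G p - G q‖ ≤ β * ‖p - q‖)
    (c d v : H) :
    (f (c + v) - f (d + v)) - (f c - f d) ≤ β * ‖c - d‖ * ‖v‖ := by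
  set u : ℝ → ℝ := fun t => f (c + t • v) - f (d + t • v) with hu
  set u' : ℝ → ℝ := fun t =>
    (inner ℝ (G (c + t • v) - G (d + t • v)) v : ℝ) with hu'
  have hline : ∀ (p : H) (t : ℝ), HasDerivAt (fun s : ℝ => p + s • v) v t := by
    intro p t
    simpa using ((hasDerivAt_id t).smul_const v).const_add p
  have hderiv : ∀ t ∈ Set.Icc (0:ℝ) 1,
      HasDerivWithinAt u (u' t) (Set.Icc (0:ℝ) 1) t := by
    intro t _
    have h1 := (hG (c + t • v)).hasFDerivAt.comp_hasDerivAt t (hline c t)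
    have h2 := (hG (d + t • v)).hasFDerivAt.comp_hasDerivAt t (hline d t)
    rw [InnerProductSpace.toDual_apply_apply] at h1 h2
    have h3 : HasDerivAt u (u' t) t := by
      rw [hu']
      simp only [inner_sub_left]
      exact h1.sub h2
    exact h3.hasDerivWithinAt
  have hbound : ∀ t ∈ Set.Icc (0:ℝ) 1, ‖u' t‖ ≤ β * ‖c - d‖ * ‖v‖ := by
    intro t _
    rw [Real.norm_eq_abs]
    calc |u' t| ≤ ‖G (c + t • v) - G (d + t • v)‖ * ‖v‖ :=
          abs_real_inner_le_norm _ _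
      _ ≤ (β * ‖(c + t • v) - (d + t • v)‖) * ‖v‖ :=
          mul_le_mul_of_nonneg_right (hG_lip _ _) (norm_nonneg _)
      _ = β * ‖c - d‖ * ‖v‖ := by
          rw [show (c + t • v) - (d + t • v) = c - d by abel]
  have hmvt := (convex_Icc (0:ℝ) 1).norm_image_sub_le_of_norm_hasDerivWithin_le
    hderiv hbound (Set.left_mem_Icc.2 zero_le_one) (Set.right_mem_Icc.2 zero_le_one)
  have hu1 : u 1 = f (c + v) - f (d + v) := by rw [hu]; simp
  have hu0 : u 0 = f c - f d := by rw [hu]; simp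
  rw [hu1, hu0, sub_zero, norm_one, mul_one, Real.norm_eq_abs] at hmvt
  exact le_trans (le_abs_self _) hmvt

/-- **Lipschitzness of the maximizer map** (first part of Lemma 2 in the paper).
Let `f : ℝ^n × ℝ^k → ℝ` (with the product carrying the Euclidean `ℓ²` structure, encoded via
`WithLp 2`) be differentiable with `β`-Lipschitz gradient, and suppose `δ ↦ f (w, δ)` is
`μ`-strongly concave for every `w` (i.e. `δ ↦ f (w, δ) + (μ/2)‖δ‖²` is concave). If `g` is
concave and `δ ↦ f (w, δ) + g δ` attains its maximum at `δ*(w)`, then `w ↦ δ*(w)` is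
`(β/μ)`-Lipschitz. -/
theorem stmt3 (n k : ℕ) (β μ : ℝ) (hβ : 0 < β) (hμ : 0 < μ)
    (f : WithLp 2 (EuclideanSpace ℝ (Fin n) × EuclideanSpace ℝ (Fin k)) → ℝ)
    (G : WithLp 2 (EuclideanSpace ℝ (Fin n) × EuclideanSpace ℝ (Fin k)) →
      WithLp 2 (EuclideanSpace ℝ (Fin n) × EuclideanSpace ℝ (Fin k)))
    (hG : ∀ p, HasGradientAt f (G p) p)
    (hG_lip : ∀ p q, ‖G p - G q‖ ≤ β * ‖p - q‖)
    (hconc : ∀ w : EuclideanSpace ℝ (Fin n), ConcaveOn ℝ Set.univ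
      (fun δ : EuclideanSpace ℝ (Fin k) =>
        f ((WithLp.equiv 2 (EuclideanSpace ℝ (Fin n) × EuclideanSpace ℝ (Fin k))).symm (w, δ))
          + (μ / 2) * ‖δ‖ ^ 2))
    (g : EuclideanSpace ℝ (Fin k) → ℝ) (hg : ConcaveOn ℝ Set.univ g)
    (δstar : EuclideanSpace ℝ (Fin n) → EuclideanSpace ℝ (Fin k))
    (hδstar : ∀ w δ,
      f ((WithLp.equiv 2 (EuclideanSpace ℝ (Fin n) × EuclideanSpace ℝ (Fin k))).symm (w, δ))
          + g δ ≤
        f ((WithLp.equiv 2 (EuclideanSpace ℝ (Fin n) × EuclideanSpace ℝ (Fin k))).symm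
            (w, δstar w)) + g (δstar w)) :
    ∀ w₁ w₂, ‖δstar w₁ - δstar w₂‖ ≤ (β / μ) * ‖w₁ - w₂‖ := by
  intro w₁ w₂
  set e := WithLp.equiv 2 (EuclideanSpace ℝ (Fin n) × EuclideanSpace ℝ (Fin k)) with he
  set δ₁ := δstar w₁ with hδ₁
  set δ₂ := δstar w₂ with hδ₂
  -- quadratic growth at both maximizers
  have hqg : ∀ w a,
      f (e.symm (w, a)) + g a ≤
        f (e.symm (w, δstar w)) + g (δstar w) - μ / 2 * ‖a - δstar w‖ ^ 2 := by
    intro w a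
    have hconc' : ConcaveOn ℝ Set.univ
        (fun δ : EuclideanSpace ℝ (Fin k) =>
          (f (e.symm (w, δ)) + g δ) + μ / 2 * ‖δ‖ ^ 2) := by
      have h1 := (hconc w).add hg
      have heq : (fun δ : EuclideanSpace ℝ (Fin k) =>
            (f (e.symm (w, δ)) + g δ) + μ / 2 * ‖δ‖ ^ 2)
          = (fun δ : EuclideanSpace ℝ (Fin k) =>
              f (e.symm (w, δ)) + (μ / 2) * ‖δ‖ ^ 2) + g := by
        funext δ; simp only [Pi.add_apply]; ring
      rw [heq]; exact h1
    exact quad_growth μ hμ (fun δ => f (e.symm (w, δ)) + g δ) hconc'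
      (δstar w) (hδstar w) a
  have h1 := hqg w₁ δ₂
  have h2 := hqg w₂ δ₁
  simp only [← hδ₁, ← hδ₂] at h1 h2
  rw [show ‖δ₂ - δ₁‖ = ‖δ₁ - δ₂‖ from norm_sub_rev _ _] at h1
  have hsum : μ * ‖δ₁ - δ₂‖ ^ 2 ≤
      (f (e.symm (w₁, δ₁)) - f (e.symm (w₂, δ₁)))
        - (f (e.symm (w₁, δ₂)) - f (e.symm (w₂, δ₂))) := by linarith
  -- mean value bound on the difference
  have hdb := diff_bound f G hG β hG_lip
    (e.symm (w₁, δ₂)) (e.symm (w₂, δ₂)) (e.symm (0, δ₁ - δ₂))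
  have hcv : e.symm (w₁, δ₂) + e.symm (0, δ₁ - δ₂) = e.symm (w₁, δ₁) := by
    rw [he, WithLp.equiv_symm_apply, ← WithLp.toLp_add, Prod.mk_add_mk]
    simp
  have hdv : e.symm (w₂, δ₂) + e.symm (0, δ₁ - δ₂) = e.symm (w₂, δ₁) := by
    rw [he, WithLp.equiv_symm_apply, ← WithLp.toLp_add, Prod.mk_add_mk]
    simp
  have hcd : e.symm (w₁, δ₂) - e.symm (w₂, δ₂) = e.symm (w₁ - w₂, 0) := by
    rw [he, WithLp.equiv_symm_apply, ← WithLp.toLp_sub, Prod.mk_sub_mk, sub_self]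
  have hnorm1 : ‖e.symm (w₁, δ₂) - e.symm (w₂, δ₂)‖ = ‖w₁ - w₂‖ := by
    rw [hcd]
    have h := WithLp.prod_norm_sq_eq_of_L2
      (e.symm (w₁ - w₂, (0 : EuclideanSpace ℝ (Fin k))))
    have hfst : (e.symm (w₁ - w₂, (0 : EuclideanSpace ℝ (Fin k)))).fst = w₁ - w₂ := rfl
    have hsnd : (e.symm (w₁ - w₂, (0 : EuclideanSpace ℝ (Fin k)))).snd = 0 := rfl
    rw [hfst, hsnd, norm_zero] at h
    have h' : ‖(e.symm (w₁ - w₂, (0 : EuclideanSpace ℝ (Fin k))) :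
        WithLp 2 (EuclideanSpace ℝ (Fin n) × EuclideanSpace ℝ (Fin k)))‖ ^ 2
        = ‖w₁ - w₂‖ ^ 2 := by rw [h]; ring
    rw [← Real.sqrt_sq (norm_nonneg (e.symm (w₁ - w₂, (0 : EuclideanSpace ℝ (Fin k))))),
      ← Real.sqrt_sq (norm_nonneg (w₁ - w₂)), h']
  have hnorm2 : ‖(e.symm ((0 : EuclideanSpace ℝ (Fin n)), δ₁ - δ₂) :
      WithLp 2 (EuclideanSpace ℝ (Fin n) × EuclideanSpace ℝ (Fin k)))‖ = ‖δ₁ - δ₂‖ := by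
    have h := WithLp.prod_norm_sq_eq_of_L2 (e.symm ((0 : EuclideanSpace ℝ (Fin n)), δ₁ - δ₂))
    have hfst : (e.symm ((0 : EuclideanSpace ℝ (Fin n)), δ₁ - δ₂)).fst = 0 := rfl
    have hsnd : (e.symm ((0 : EuclideanSpace ℝ (Fin n)), δ₁ - δ₂)).snd = δ₁ - δ₂ := rfl
    rw [hfst, hsnd, norm_zero] at h
    have h' : ‖(e.symm ((0 : EuclideanSpace ℝ (Fin n)), δ₁ - δ₂) :
        WithLp 2 (EuclideanSpace ℝ (Fin n) × EuclideanSpace ℝ (Fin k)))‖ ^ 2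
        = ‖δ₁ - δ₂‖ ^ 2 := by rw [h]; ring
    rw [← Real.sqrt_sq (norm_nonneg (e.symm ((0 : EuclideanSpace ℝ (Fin n)), δ₁ - δ₂))),
      ← Real.sqrt_sq (norm_nonneg (δ₁ - δ₂)), h']
  rw [hcv, hdv, hnorm1, hnorm2] at hdb
  have hfinal : μ * ‖δ₁ - δ₂‖ ^ 2 ≤ β * ‖w₁ - w₂‖ * ‖δ₁ - δ₂‖ :=
    le_trans hsum hdb
  rcases eq_or_ne (δ₁ - δ₂) 0 with h0 | h0
  · rw [h0, norm_zero]; positivity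
  · have hpos : 0 < ‖δ₁ - δ₂‖ := norm_pos_iff.2 h0
    rw [div_mul_eq_mul_div, le_div_iff₀ hμ]
    nlinarith [hfinal, hpos]
end

section
/- Let f : ℝ^n × ℝ^k → ℝ be differentiable with β-Lipschitz gradient on ℝ^n × ℝ^k (β > 0), and suppose that for every w ∈ ℝ^n the map δ ↦ f(w, δ) is μ-strongly concave (μ > 0). Let g : ℝ^k → ℝ be concave, and suppose that for every w the function δ ↦ f(w, δ) + g(δ) attains its maximum at a (necessarily unique) point δ*(w) ∈ ℝ^k. Then the value function F(w) := max_{δ} ( f(w, δ) + g(δ) ) is differentiable with ∇F(w) = ∇_w f(w, δ*(w)), and ∇F is (β + β²/μ)-Lipschitz: ‖∇F(w₁) − ∇F(w₂)‖ ≤ β(1 + β/μ)‖w₁ − w₂‖ for all w₁, w₂ ∈ ℝ^n. -/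
section Helpers

open InnerProductSpace

local notation "⟪" x ", " y "⟫" => @inner ℝ _ _ x y

variable {H : Type*} [NormedAddCommGroup H] [InnerProductSpace ℝ H]

/-- combination norm identity -/
lemma norm_combo_sq_s4 (a b : ℝ) (hab : a + b = 1) (u v : H) :
    ‖a • u + b • v‖ ^ 2 = a * ‖u‖ ^ 2 + b * ‖v‖ ^ 2 - a * b * ‖u - v‖ ^ 2 := by
  have h1 : ‖a • u + b • v‖ ^ 2 = ⟪a • u + b • v, a • u + b • v⟫ :=
    (real_inner_self_eq_norm_sq _).symm
  have h2 : ‖u - v‖ ^ 2 = ⟪u - v, u - v⟫ := (real_inner_self_eq_norm_sq _).symm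
  have h3 : ‖u‖ ^ 2 = ⟪u, u⟫ := (real_inner_self_eq_norm_sq _).symm
  have h4 : ‖v‖ ^ 2 = ⟪v, v⟫ := (real_inner_self_eq_norm_sq _).symm
  rw [h1, h2, h3, h4]
  simp only [inner_add_add_self, inner_sub_sub_self, real_inner_smul_left,
    real_inner_smul_right]
  have : b = 1 - a := by linarith
  subst this
  ring

/-- strong concavity maximizer inequality -/
lemma strong_concave_max {φ : H → ℝ} {μ : ℝ} (hμ : 0 < μ)
    (hψ : ConcaveOn ℝ Set.univ (fun x => φ x + (μ / 2) * ‖x‖ ^ 2))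
    {u : H} (hu : ∀ v, φ v ≤ φ u) (v : H) :
    φ v + (μ / 2) * ‖u - v‖ ^ 2 ≤ φ u := by
  have key : ∀ t : ℝ, t ∈ Set.Ioo (0:ℝ) 1 →
      φ v + (μ / 2) * (1 - t) * ‖u - v‖ ^ 2 ≤ φ u := by
    intro t ht
    have ha : (0:ℝ) ≤ 1 - t := by linarith [ht.2]
    have hb : (0:ℝ) ≤ t := le_of_lt ht.1
    have hcomb := hψ.2 (Set.mem_univ u) (Set.mem_univ v) ha hb (by ring)
    have hnorm := norm_combo_sq_s4 (1 - t) t (by ring) u v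
    simp only [smul_eq_mul] at hcomb
    have hmax := hu ((1 - t) • u + t • v)
    nlinarith [ht.1, ht.2, sq_nonneg ‖u - v‖]
  have ht : Filter.Tendsto (fun t : ℝ => φ v + (μ / 2) * (1 - t) * ‖u - v‖ ^ 2)
      (nhdsWithin 0 (Set.Ioo (0:ℝ) 1)) (nhds (φ v + (μ / 2) * (1 - 0) * ‖u - v‖ ^ 2)) := by
    apply Filter.Tendsto.mono_left _ nhdsWithin_le_nhds
    exact (Continuous.tendsto (by continuity) 0)
  have hne : (nhdsWithin (0:ℝ) (Set.Ioo 0 1)).NeBot := by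
    apply mem_closure_iff_nhdsWithin_neBot.mp
    rw [closure_Ioo one_ne_zero.symm]
    exact Set.left_mem_Icc.mpr zero_le_one
  have := le_of_tendsto ht (Filter.eventually_of_mem self_mem_nhdsWithin key)
  simpa using this

variable [CompleteSpace H]

/-- descent-type bound from Lipschitz gradient -/
lemma grad_approx {f : H → ℝ} {G : H → H} (hG : ∀ p, HasFDerivAt f (toDual ℝ H (G p)) p)
    {β : ℝ} (hβ0 : 0 ≤ β) (hlip : ∀ p q, ‖G p - G q‖ ≤ β * ‖p - q‖) (p q : H) :
    |f q - f p - ⟪G p, q - p⟫| ≤ β * ‖q - p‖ ^ 2 := by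
  set A : H → ℝ := fun x => f x - ⟪G p, x⟫ with hA
  have hder : ∀ x, HasFDerivAt A (toDual ℝ H (G x) - toDual ℝ H (G p)) x := fun x =>
    (hG x).sub ((toDual ℝ H (G p)).hasFDerivAt)
  have hbound : ∀ x ∈ segment ℝ p q, ‖toDual ℝ H (G x) - toDual ℝ H (G p)‖ ≤ β * ‖q - p‖ := by
    rintro x hx
    rw [← map_sub, (toDual ℝ H).norm_map]
    refine (hlip x p).trans ?_
    obtain ⟨a, b, ha, hb, hab, rfl⟩ := hx
    have : a • p + b • q - p = b • (q - p) := by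
      rw [smul_sub]
      have : a = 1 - b := by linarith
      subst this
      module
    rw [this, norm_smul, Real.norm_of_nonneg hb]
    have hb1 : b ≤ 1 := by linarith
    nlinarith [mul_nonneg (mul_nonneg hβ0 (norm_nonneg (q - p))) (sub_nonneg.mpr hb1)]
  have hseg := (convex_segment p q).norm_image_sub_le_of_norm_hasFDerivWithin_le
    (fun x hx => (hder x).hasFDerivWithinAt) hbound (left_mem_segment ℝ p q)
    (right_mem_segment ℝ p q)
  have : A q - A p = f q - f p - ⟪G p, q - p⟫ := by
    simp only [hA, inner_sub_right]; ring
  calc |f q - f p - ⟪G p, q - p⟫| = ‖A q - A p‖ := by rw [this]; rfl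
    _ ≤ β * ‖q - p‖ * ‖q - p‖ := hseg
    _ ≤ β * ‖q - p‖ ^ 2 := by nlinarith [norm_nonneg (q-p)]

section Slice
variable {H₁ H₂ : Type*} [NormedAddCommGroup H₁] [InnerProductSpace ℝ H₁]
  [NormedAddCommGroup H₂] [InnerProductSpace ℝ H₂] [CompleteSpace H₁] [CompleteSpace H₂]

noncomputable def inclCLM : H₂ →L[ℝ] WithLp 2 (H₁ × H₂) :=
  ((WithLp.prodContinuousLinearEquiv 2 ℝ H₁ H₂).symm : (H₁ × H₂) →L[ℝ] WithLp 2 (H₁ × H₂)).comp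
    (ContinuousLinearMap.inr ℝ H₁ H₂)

lemma inclCLM_apply (δ : H₂) :
    (inclCLM δ : WithLp 2 (H₁ × H₂)) = (WithLp.equiv 2 (H₁ × H₂)).symm (0, δ) := rfl

lemma inclCLM_norm_le : ‖(inclCLM : H₂ →L[ℝ] WithLp 2 (H₁ × H₂))‖ ≤ 1 := by
  apply ContinuousLinearMap.opNorm_le_bound _ zero_le_one
  intro δ
  rw [inclCLM_apply, WithLp.equiv_symm_apply, WithLp.norm_toLp_snd, one_mul]

lemma hasFDerivAt_slice {f : WithLp 2 (H₁ × H₂) → ℝ} {G : WithLp 2 (H₁ × H₂) → WithLp 2 (H₁ × H₂)}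
    (hG : ∀ p, HasFDerivAt f (toDual ℝ _ (G p)) p) (w : H₁) (δ : H₂) :
    HasFDerivAt (fun δ' => f ((WithLp.equiv 2 (H₁ × H₂)).symm (w, δ')))
      ((toDual ℝ _ (G ((WithLp.equiv 2 (H₁ × H₂)).symm (w, δ)))).comp
        (inclCLM : H₂ →L[ℝ] WithLp 2 (H₁ × H₂))) δ := by
  have hι : ∀ δ' : H₂, (WithLp.equiv 2 (H₁ × H₂)).symm (w, δ') =
      (WithLp.equiv 2 (H₁ × H₂)).symm (w, 0) + inclCLM δ' := by
    intro δ'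
    rw [inclCLM_apply, WithLp.equiv_symm_apply, ← WithLp.toLp_add, Prod.mk_add_mk, add_zero, zero_add]
  have h1 : HasFDerivAt (fun δ' : H₂ => (WithLp.equiv 2 (H₁ × H₂)).symm (w, 0) + inclCLM δ')
      (inclCLM : H₂ →L[ℝ] WithLp 2 (H₁ × H₂)) δ :=
    (inclCLM : H₂ →L[ℝ] WithLp 2 (H₁ × H₂)).hasFDerivAt.const_add _
  have h2 : HasFDerivAt (fun δ' : H₂ => (WithLp.equiv 2 (H₁ × H₂)).symm (w, δ'))
      (inclCLM : H₂ →L[ℝ] WithLp 2 (H₁ × H₂)) δ := by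
    have he : (fun δ' : H₂ => (WithLp.equiv 2 (H₁ × H₂)).symm (w, δ'))
        = fun δ' : H₂ => (WithLp.equiv 2 (H₁ × H₂)).symm (w, 0) + inclCLM δ' := funext hι
    rw [he]; exact h1
  exact (hG ((WithLp.equiv 2 (H₁ × H₂)).symm (w, δ))).comp δ h2

lemma slice_diff_bound {f : WithLp 2 (H₁ × H₂) → ℝ}
    {G : WithLp 2 (H₁ × H₂) → WithLp 2 (H₁ × H₂)}
    (hG : ∀ p, HasFDerivAt f (toDual ℝ _ (G p)) p) {β : ℝ} (hβ0 : 0 ≤ β)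
    (hlip : ∀ p q, ‖G p - G q‖ ≤ β * ‖p - q‖) (w₁ w₂ : H₁) (δ₁ δ₂ : H₂) :
    |(f ((WithLp.equiv 2 (H₁ × H₂)).symm (w₁, δ₁)) - f ((WithLp.equiv 2 (H₁ × H₂)).symm (w₂, δ₁)))
      - (f ((WithLp.equiv 2 (H₁ × H₂)).symm (w₁, δ₂))
        - f ((WithLp.equiv 2 (H₁ × H₂)).symm (w₂, δ₂)))| ≤ β * ‖w₁ - w₂‖ * ‖δ₁ - δ₂‖ := by
  set ι := fun (w : H₁) (δ : H₂) => (WithLp.equiv 2 (H₁ × H₂)).symm (w, δ) with hιdef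
  set A : H₂ → ℝ := fun δ => f (ι w₁ δ) - f (ι w₂ δ) with hA
  have hder : ∀ δ, HasFDerivAt A
      (((toDual ℝ _ (G (ι w₁ δ))).comp (inclCLM : H₂ →L[ℝ] WithLp 2 (H₁ × H₂)))
        - ((toDual ℝ _ (G (ι w₂ δ))).comp (inclCLM : H₂ →L[ℝ] WithLp 2 (H₁ × H₂)))) δ :=
    fun δ => (hasFDerivAt_slice hG w₁ δ).sub (hasFDerivAt_slice hG w₂ δ)
  have hbound : ∀ δ ∈ segment ℝ δ₂ δ₁,
      ‖((toDual ℝ _ (G (ι w₁ δ))).comp (inclCLM : H₂ →L[ℝ] WithLp 2 (H₁ × H₂)))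
        - ((toDual ℝ _ (G (ι w₂ δ))).comp (inclCLM : H₂ →L[ℝ] WithLp 2 (H₁ × H₂)))‖
        ≤ β * ‖w₁ - w₂‖ := by
    intro δ _
    rw [← ContinuousLinearMap.sub_comp]
    refine (ContinuousLinearMap.opNorm_comp_le _ _).trans ?_
    have h1 : ‖toDual ℝ (WithLp 2 (H₁ × H₂)) (G (ι w₁ δ)) - toDual ℝ _ (G (ι w₂ δ))‖
        = ‖G (ι w₁ δ) - G (ι w₂ δ)‖ := by
      rw [← map_sub, (toDual ℝ _).norm_map]
    rw [h1]
    have h2 : ‖G (ι w₁ δ) - G (ι w₂ δ)‖ ≤ β * ‖w₁ - w₂‖ := by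
      refine (hlip _ _).trans ?_
      have : ι w₁ δ - ι w₂ δ = (WithLp.equiv 2 (H₁ × H₂)).symm (w₁ - w₂, 0) := by
        rw [hιdef]; simp only [WithLp.equiv_symm_apply, ← WithLp.toLp_sub, Prod.mk_sub_mk, sub_self]
      rw [this, WithLp.equiv_symm_apply, WithLp.norm_toLp_fst]
    nlinarith [inclCLM_norm_le (H₁ := H₁) (H₂ := H₂), ContinuousLinearMap.opNorm_nonneg
      (inclCLM : H₂ →L[ℝ] WithLp 2 (H₁ × H₂)), norm_nonneg (G (ι w₁ δ) - G (ι w₂ δ)),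
      mul_nonneg hβ0 (norm_nonneg (w₁ - w₂))]
  have hseg := (convex_segment δ₂ δ₁).norm_image_sub_le_of_norm_hasFDerivWithin_le
    (fun x _ => (hder x).hasFDerivWithinAt) hbound (right_mem_segment ℝ δ₂ δ₁)
    (left_mem_segment ℝ δ₂ δ₁)
  calc |(f (ι w₁ δ₁) - f (ι w₂ δ₁)) - (f (ι w₁ δ₂) - f (ι w₂ δ₂))|
      = ‖A δ₂ - A δ₁‖ := by rw [Real.norm_eq_abs, abs_sub_comm]
    _ ≤ β * ‖w₁ - w₂‖ * ‖δ₂ - δ₁‖ := hseg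
    _ = β * ‖w₁ - w₂‖ * ‖δ₁ - δ₂‖ := by rw [norm_sub_rev δ₂ δ₁]

end Slice

lemma isLittleO_of_sq_bound {E' : Type*} [NormedAddCommGroup E'] {φ : E' → ℝ} {C : ℝ}
    (h : ∀ x, |φ x| ≤ C * ‖x‖ ^ 2) : φ =o[nhds 0] fun x : E' => x := by
  have h1 : φ =O[nhds 0] fun x : E' => ‖x‖ ^ 2 :=
    Asymptotics.IsBigO.of_bound C (Filter.Eventually.of_forall fun x => by
      simpa [Real.norm_eq_abs, abs_of_nonneg (sq_nonneg ‖x‖)] using h x)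
  have h2 : (fun x : E' => ‖x‖ ^ 2) =o[nhds 0] fun x : E' => x := by
    rw [← Asymptotics.isLittleO_norm_right]
    have ha : (fun x : E' => ‖x‖) =o[nhds 0] (fun _ : E' => (1 : ℝ)) :=
      (Asymptotics.isLittleO_one_iff ℝ).mpr tendsto_norm_zero
    have hb : (fun x : E' => ‖x‖) =O[nhds 0] fun x : E' => ‖x‖ :=
      Asymptotics.isBigO_refl _ _
    simpa [pow_two] using ha.mul_isBigO hb
  exact h1.trans_isLittleO h2

end Helpers

open InnerProductSpace



set_option maxHeartbeats 1000000 in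
/-- **Smoothness of the value function** (second part of Lemma 2 in the paper).
Let `f : ℝ^n × ℝ^k → ℝ` (product with Euclidean `ℓ²` structure via `WithLp 2`) be
differentiable with `β`-Lipschitz gradient `G`, with `δ ↦ f (w, δ)` `μ`-strongly concave for
every `w`, let `g` be concave, and suppose `δ ↦ f (w, δ) + g δ` attains its maximum at
`δ*(w)`. Then `F(w) := max_δ (f (w, δ) + g δ)` is differentiable with
`∇F(w) = ∇_w f (w, δ*(w))` (the first block of the full gradient), and `∇F` is
`(β + β²/μ)`-Lipschitz. -/
theorem stmt4 (n k : ℕ) (β μ : ℝ) (hβ : 0 < β) (hμ : 0 < μ)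
    (f : WithLp 2 (EuclideanSpace ℝ (Fin n) × EuclideanSpace ℝ (Fin k)) → ℝ)
    (G : WithLp 2 (EuclideanSpace ℝ (Fin n) × EuclideanSpace ℝ (Fin k)) →
      WithLp 2 (EuclideanSpace ℝ (Fin n) × EuclideanSpace ℝ (Fin k)))
    (hG : ∀ p, HasGradientAt f (G p) p)
    (hG_lip : ∀ p q, ‖G p - G q‖ ≤ β * ‖p - q‖)
    (hconc : ∀ w : EuclideanSpace ℝ (Fin n), ConcaveOn ℝ Set.univ
      (fun δ : EuclideanSpace ℝ (Fin k) =>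
        f ((WithLp.equiv 2 (EuclideanSpace ℝ (Fin n) × EuclideanSpace ℝ (Fin k))).symm (w, δ))
          + (μ / 2) * ‖δ‖ ^ 2))
    (g : EuclideanSpace ℝ (Fin k) → ℝ) (hg : ConcaveOn ℝ Set.univ g)
    (δstar : EuclideanSpace ℝ (Fin n) → EuclideanSpace ℝ (Fin k))
    (hδstar : ∀ w δ,
      f ((WithLp.equiv 2 (EuclideanSpace ℝ (Fin n) × EuclideanSpace ℝ (Fin k))).symm (w, δ))
          + g δ ≤
        f ((WithLp.equiv 2 (EuclideanSpace ℝ (Fin n) × EuclideanSpace ℝ (Fin k))).symm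
            (w, δstar w)) + g (δstar w))
    (Gw : EuclideanSpace ℝ (Fin n) → EuclideanSpace ℝ (Fin n))
    (hGw : ∀ w, Gw w =
      (WithLp.equiv 2 (EuclideanSpace ℝ (Fin n) × EuclideanSpace ℝ (Fin k))
        (G ((WithLp.equiv 2 (EuclideanSpace ℝ (Fin n) × EuclideanSpace ℝ (Fin k))).symm
          (w, δstar w)))).1)
    (F : EuclideanSpace ℝ (Fin n) → ℝ)
    (hF : ∀ w, F w = ⨆ δ : EuclideanSpace ℝ (Fin k),
      (f ((WithLp.equiv 2 (EuclideanSpace ℝ (Fin n) × EuclideanSpace ℝ (Fin k))).symm (w, δ))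
        + g δ)) :
    (∀ w, HasGradientAt F (Gw w) w) ∧
      ∀ w₁ w₂, ‖Gw w₁ - Gw w₂‖ ≤ (β + β ^ 2 / μ) * ‖w₁ - w₂‖ := by
  classical
  have hβ0 : (0:ℝ) ≤ β := hβ.le
  set e := WithLp.equiv 2 (EuclideanSpace ℝ (Fin n) × EuclideanSpace ℝ (Fin k)) with he
  set ι := fun (w : EuclideanSpace ℝ (Fin n)) (δ : EuclideanSpace ℝ (Fin k)) =>
    e.symm (w, δ) with hι
  have hG' : ∀ p, HasFDerivAt f (toDual ℝ _ (G p)) p := fun p => (hG p).hasFDerivAt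
  -- strong concavity maximizer inequality
  have hstrong : ∀ w v, (f (ι w v) + g v) + (μ / 2) * ‖δstar w - v‖ ^ 2
      ≤ f (ι w (δstar w)) + g (δstar w) := by
    intro w v
    have hcw : ConcaveOn ℝ Set.univ
        (fun δ => (f (ι w δ) + g δ) + (μ / 2) * ‖δ‖ ^ 2) := by
      have h1 := (hconc w).add hg
      have h2 : (fun δ => (f (ι w δ) + (μ / 2) * ‖δ‖ ^ 2) + g δ)
          = fun δ => (f (ι w δ) + g δ) + (μ / 2) * ‖δ‖ ^ 2 := by
        funext δ; ring
      rw [← h2]; exact h1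
    exact strong_concave_max hμ hcw (hδstar w) v
  -- Lipschitz continuity of δstar
  have hδlip : ∀ w₁ w₂, ‖δstar w₁ - δstar w₂‖ ≤ (β / μ) * ‖w₁ - w₂‖ := by
    intro w₁ w₂
    set d := ‖δstar w₁ - δstar w₂‖ with hd
    have hd0 : 0 ≤ d := norm_nonneg _
    have h1 := hstrong w₁ (δstar w₂)
    have h2 := hstrong w₂ (δstar w₁)
    rw [norm_sub_rev] at h2
    have h3 := slice_diff_bound hG' hβ0 hG_lip w₁ w₂ (δstar w₁) (δstar w₂)
    have h4 := (abs_le.mp h3).2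
    have hd2 : μ * d * d ≤ β * ‖w₁ - w₂‖ * d := by nlinarith
    rcases eq_or_lt_of_le hd0 with h | h
    · rw [← h]
      positivity
    · have h5 : μ * d ≤ β * ‖w₁ - w₂‖ := le_of_mul_le_mul_right (by nlinarith) h
      rw [div_mul_eq_mul_div, le_div_iff₀ hμ]
      nlinarith
  -- first component facts
  have hfst_norm : ∀ z : WithLp 2 (EuclideanSpace ℝ (Fin n) × EuclideanSpace ℝ (Fin k)),
      ‖z.fst‖ ≤ ‖z‖ := by
    intro z
    have := WithLp.prod_norm_sq_eq_of_L2 z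
    nlinarith [norm_nonneg z.fst, norm_nonneg z.snd, norm_nonneg z, sq_nonneg ‖z.snd‖]
  have hpair_norm : ∀ (a : EuclideanSpace ℝ (Fin n)) (b : EuclideanSpace ℝ (Fin k)),
      ‖e.symm (a, b)‖ ≤ ‖a‖ + ‖b‖ := by
    intro a b
    have h1 := WithLp.prod_norm_sq_eq_of_L2 (e.symm (a, b))
    have h2 : (e.symm (a, b)).fst = a := rfl
    have h3 : (e.symm (a, b)).snd = b := rfl
    rw [h2, h3] at h1
    nlinarith [norm_nonneg (e.symm (a, b)), norm_nonneg a, norm_nonneg b,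
      mul_nonneg (norm_nonneg a) (norm_nonneg b)]
  -- difference of embedded points
  have hιsub : ∀ (a c : EuclideanSpace ℝ (Fin n)) (b d : EuclideanSpace ℝ (Fin k)),
      ι a b - ι c d = e.symm (a - c, b - d) := by
    intro a c b d
    rfl
  -- Lipschitz bound for Gw
  have hGwlip : ∀ w₁ w₂, ‖Gw w₁ - Gw w₂‖ ≤ (β + β ^ 2 / μ) * ‖w₁ - w₂‖ := by
    intro w₁ w₂
    have hfst : Gw w₁ - Gw w₂ = (G (ι w₁ (δstar w₁)) - G (ι w₂ (δstar w₂))).fst := by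
      rw [hGw w₁, hGw w₂]; rfl
    calc ‖Gw w₁ - Gw w₂‖ = ‖(G (ι w₁ (δstar w₁)) - G (ι w₂ (δstar w₂))).fst‖ := by rw [hfst]
      _ ≤ ‖G (ι w₁ (δstar w₁)) - G (ι w₂ (δstar w₂))‖ := hfst_norm _
      _ ≤ β * ‖ι w₁ (δstar w₁) - ι w₂ (δstar w₂)‖ := hG_lip _ _
      _ ≤ β * (‖w₁ - w₂‖ + ‖δstar w₁ - δstar w₂‖) := by
          rw [hιsub]
          exact mul_le_mul_of_nonneg_left (hpair_norm _ _) hβ0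
      _ ≤ β * (‖w₁ - w₂‖ + (β / μ) * ‖w₁ - w₂‖) := by
          have := hδlip w₁ w₂
          nlinarith
      _ = (β + β ^ 2 / μ) * ‖w₁ - w₂‖ := by ring
  -- value of F
  have hFval : ∀ w, F w = f (ι w (δstar w)) + g (δstar w) := by
    intro w
    rw [hF w]
    apply le_antisymm
    · exact ciSup_le (hδstar w)
    · exact le_ciSup ⟨f (ι w (δstar w)) + g (δstar w),
        Set.forall_mem_range.mpr (hδstar w)⟩ (δstar w)
  -- inner product computation
  have hinner : ∀ (p : WithLp 2 (EuclideanSpace ℝ (Fin n) × EuclideanSpace ℝ (Fin k)))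
      (a : EuclideanSpace ℝ (Fin n)),
      (inner ℝ p (e.symm (a, 0)) : ℝ) = inner ℝ (p.fst) a := by
    intro p a
    rw [WithLp.prod_inner_apply]
    have h2 : (e.symm (a, (0:EuclideanSpace ℝ (Fin k)))).ofLp.1 = a := rfl
    have h3 : (e.symm (a, (0:EuclideanSpace ℝ (Fin k)))).ofLp.2 = 0 := rfl
    rw [h2, h3, inner_zero_right, add_zero]
    rfl
  refine ⟨?_, hGwlip⟩
  intro w
  rw [hasGradientAt_iff_hasFDerivAt, hasFDerivAt_iff_isLittleO_nhds_zero]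
  have key : ∀ h : EuclideanSpace ℝ (Fin n),
      |F (w + h) - F w - (inner ℝ (Gw w) h : ℝ)| ≤ (2 * β + (β + β ^ 2 / μ)) * ‖h‖ ^ 2 := by
    intro h
    have hh2 : (0:ℝ) ≤ ‖h‖ ^ 2 := sq_nonneg _
    -- lower bound
    have l1 := grad_approx hG' hβ0 hG_lip (ι w (δstar w)) (ι (w + h) (δstar w))
    have hsub1 : ι (w + h) (δstar w) - ι w (δstar w) = e.symm (h, 0) := by
      rw [hιsub]; congr 1
      rw [Prod.mk.injEq]
      constructor
      · abel
      · simp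
    rw [hsub1] at l1
    have hn1 : ‖e.symm (h, (0:EuclideanSpace ℝ (Fin k)))‖ = ‖h‖ := by
      rw [he]; exact WithLp.norm_toLp_fst _ _ _ _
    rw [hn1, hinner] at l1
    have hGww : (G (ι w (δstar w))).fst = Gw w := by rw [hGw w]; rfl
    rw [hGww] at l1
    have hlow : F w + (inner ℝ (Gw w) h : ℝ) - β * ‖h‖ ^ 2 ≤ F (w + h) := by
      have hge : f (ι (w + h) (δstar w)) + g (δstar w) ≤ F (w + h) := by
        rw [hFval (w + h)]; exact hδstar (w + h) (δstar w)
      have := (abs_le.mp l1).1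
      rw [hFval w]
      linarith
    -- upper bound
    have l2 := grad_approx hG' hβ0 hG_lip (ι (w + h) (δstar (w + h))) (ι w (δstar (w + h)))
    have hsub2 : ι w (δstar (w + h)) - ι (w + h) (δstar (w + h)) = e.symm (-h, 0) := by
      rw [hιsub]; congr 1
      rw [Prod.mk.injEq]
      constructor
      · abel
      · simp
    rw [hsub2] at l2
    have hn2 : ‖e.symm (-h, (0:EuclideanSpace ℝ (Fin k)))‖ = ‖h‖ := by
      rw [he, WithLp.equiv_symm_apply, WithLp.norm_toLp_fst, norm_neg]
    rw [hn2, hinner] at l2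
    have hGwh : (G (ι (w + h) (δstar (w + h)))).fst = Gw (w + h) := by rw [hGw (w + h)]; rfl
    rw [hGwh, inner_neg_right] at l2
    have hup : F (w + h) ≤ F w + (inner ℝ (Gw (w + h)) h : ℝ) + β * ‖h‖ ^ 2 := by
      have hge : f (ι w (δstar (w + h))) + g (δstar (w + h)) ≤ F w := by
        rw [hFval w]; exact hδstar w (δstar (w + h))
      have := (abs_le.mp l2).1
      rw [hFval (w + h)]
      linarith
    have hinner_diff : (inner ℝ (Gw (w + h)) h : ℝ) - (inner ℝ (Gw w) h : ℝ)
        ≤ (β + β ^ 2 / μ) * ‖h‖ ^ 2 := by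
      have h1 : (inner ℝ (Gw (w + h)) h : ℝ) - inner ℝ (Gw w) h = inner ℝ (Gw (w + h) - Gw w) h := by
        rw [inner_sub_left]
      rw [h1]
      calc (inner ℝ (Gw (w + h) - Gw w) h : ℝ) ≤ ‖Gw (w + h) - Gw w‖ * ‖h‖ :=
            real_inner_le_norm _ _
        _ ≤ ((β + β ^ 2 / μ) * ‖w + h - w‖) * ‖h‖ := by
            have := hGwlip (w + h) w
            have hn : (0:ℝ) ≤ ‖h‖ := norm_nonneg _
            nlinarith
        _ = (β + β ^ 2 / μ) * ‖h‖ ^ 2 := by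
            have : w + h - w = h := by abel
            rw [this]; ring
    have hcp : (0:ℝ) ≤ β ^ 2 / μ := by positivity
    rw [abs_le]
    constructor
    · nlinarith
    · nlinarith
  have := isLittleO_of_sq_bound key
  have heq : (fun h : EuclideanSpace ℝ (Fin n) =>
      F (w + h) - F w - (toDual ℝ (EuclideanSpace ℝ (Fin n)) (Gw w)) h)
      = fun h => F (w + h) - F w - (inner ℝ (Gw w) h : ℝ) := by
    funext h
    rw [toDual_apply_apply]
  rw [heq]
  exact this
end

section
/- Let h₁, h₂ : ℝ^k → ℝ be differentiable, with h₁ concave and h₂ μ-strongly concave (μ > 0). Suppose δ₁* is a global maximizer of h₁ and δ₂* is the global maximizer of h₂. Then μ‖δ₁* − δ₂*‖² ≤ ⟨δ₂* − δ₁*, ∇h₂(δ₁*) − ∇h₁(δ₁*)⟩, and consequently ‖δ₁* − δ₂*‖ ≤ (1/μ)‖∇h₂(δ₁*) − ∇h₁(δ₁*)‖. -/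
open scoped RealInnerProductSpace

open Filter Set Topology
open scoped Topology

/-- First-order condition for a concave differentiable function: the graph lies below
every tangent plane. -/
lemma concave_tangent_le {E : Type*} [NormedAddCommGroup E] [InnerProductSpace ℝ E]
    [CompleteSpace E] {f : E → ℝ} (hf : ConcaveOn ℝ Set.univ f) {g x : E}
    (hg : HasGradientAt f g x) (y : E) : f y ≤ f x + ⟪g, y - x⟫ := by
  have hL : HasDerivAt (fun t : ℝ => x + t • (y - x)) (y - x) 0 := by
    simpa using ((hasDerivAt_id (0 : ℝ)).smul_const (y - x)).const_add x
  have hx0 : x + (0 : ℝ) • (y - x) = x := by simp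
  have hφ : HasDerivAt (fun t : ℝ => f (x + t • (y - x))) ⟪g, y - x⟫ 0 := by
    have hfd : HasFDerivAt f (InnerProductSpace.toDual ℝ E g) (x + (0 : ℝ) • (y - x)) := by
      rw [hx0]; exact hg.hasFDerivAt
    exact hfd.comp_hasDerivAt 0 hL
  have htend : Tendsto (slope (fun t : ℝ => f (x + t • (y - x))) 0) (𝓝[>] (0 : ℝ))
      (𝓝 ⟪g, y - x⟫) :=
    (hasDerivAt_iff_tendsto_slope.mp hφ).mono_left
      (nhdsWithin_mono _ fun t ht => ne_of_gt ht)
  have hev : ∀ᶠ t in 𝓝[>] (0 : ℝ),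
      f y - f x ≤ slope (fun t : ℝ => f (x + t • (y - x))) 0 t := by
    filter_upwards [Ioc_mem_nhdsGT_of_mem (Set.left_mem_Ico.2 one_pos)] with t ht
    obtain ⟨ht0, ht1⟩ := ht
    have hcomb : (1 - t) • f x + t • f y ≤ f ((1 - t) • x + t • y) :=
      hf.2 (mem_univ x) (mem_univ y) (by linarith) ht0.le (by ring)
    have hpt : (1 - t) • x + t • y = x + t • (y - x) := by
      rw [sub_smul, smul_sub, one_smul]; abel
    rw [hpt] at hcomb
    rw [slope_def_field]
    have : f y - f x ≤ (f (x + t • (y - x)) - f (x + (0 : ℝ) • (y - x))) / t := by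
      rw [hx0, le_div_iff₀ ht0]
      simp only [smul_eq_mul] at hcomb
      nlinarith
    simpa [div_eq_inv_mul] using this
  have := ge_of_tendsto htend hev
  linarith

/-- At a global maximum, the gradient vanishes. -/
lemma gradient_eq_zero_of_max {E : Type*} [NormedAddCommGroup E] [InnerProductSpace ℝ E]
    [CompleteSpace E] {f : E → ℝ} {g x : E} (hg : HasGradientAt f g x)
    (hmax : ∀ y, f y ≤ f x) : g = 0 := by
  have hloc : IsLocalMax f x := Filter.Eventually.of_forall hmax
  have h0 : InnerProductSpace.toDual ℝ E g = 0 := hloc.hasFDerivAt_eq_zero hg.hasFDerivAt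
  have := congrArg (InnerProductSpace.toDual ℝ E).symm h0
  simpa using this

/-- Gradient of `f + (μ/2)‖·‖²`. -/
lemma hasGradientAt_add_half_sq {E : Type*} [NormedAddCommGroup E] [InnerProductSpace ℝ E]
    [CompleteSpace E] {f : E → ℝ} {g x : E} (μ : ℝ) (hg : HasGradientAt f g x) :
    HasGradientAt (fun δ => f δ + (μ / 2) * ‖δ‖ ^ 2) (g + μ • x) x := by
  rw [hasGradientAt_iff_hasFDerivAt]
  have hsq : HasFDerivAt (fun δ : E => ⟪δ, δ⟫)
      ((fderivInnerCLM ℝ ((id x : E), (id x : E))).comp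
        ((ContinuousLinearMap.id ℝ E).prod (ContinuousLinearMap.id ℝ E))) x :=
    (hasFDerivAt_id x).inner ℝ (hasFDerivAt_id x)
  have hsq' : HasFDerivAt (fun δ : E => (μ / 2) * ‖δ‖ ^ 2)
      ((μ / 2) • ((fderivInnerCLM ℝ ((id x : E), (id x : E))).comp
        ((ContinuousLinearMap.id ℝ E).prod (ContinuousLinearMap.id ℝ E)))) x := by
    have := hsq.const_smul (μ / 2)
    refine this.congr_of_eventuallyEq (Filter.Eventually.of_forall fun δ => ?_)
    simp [real_inner_self_eq_norm_sq]
  have := (hg.hasFDerivAt).add hsq'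
  refine this.congr_fderiv ?_
  ext v
  simp [real_inner_smul_left, real_inner_comm x v]
  ring

/-- Comparison of maximizers of a concave and a strongly concave function.
If `δ₁*` is a global maximizer of a differentiable concave `h₁` and `δ₂*` is the global
maximizer of a differentiable `μ`-strongly concave `h₂`, then
`μ‖δ₁* − δ₂*‖² ≤ ⟨δ₂* − δ₁*, ∇h₂(δ₁*) − ∇h₁(δ₁*)⟩` and consequently
`‖δ₁* − δ₂*‖ ≤ (1/μ)‖∇h₂(δ₁*) − ∇h₁(δ₁*)‖`. -/
theorem stmt5 (k : ℕ) (μ : ℝ) (hμ : 0 < μ)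
    (h₁ h₂ : EuclideanSpace ℝ (Fin k) → ℝ)
    (G₁ G₂ : EuclideanSpace ℝ (Fin k) → EuclideanSpace ℝ (Fin k))
    (hG₁ : ∀ δ, HasGradientAt h₁ (G₁ δ) δ)
    (hG₂ : ∀ δ, HasGradientAt h₂ (G₂ δ) δ)
    (hconc₁ : ConcaveOn ℝ Set.univ h₁)
    (hconc₂ : ConcaveOn ℝ Set.univ fun δ => h₂ δ + (μ / 2) * ‖δ‖ ^ 2)
    (δ₁ δ₂ : EuclideanSpace ℝ (Fin k))
    (hmax₁ : ∀ δ, h₁ δ ≤ h₁ δ₁)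
    (hmax₂ : ∀ δ, h₂ δ ≤ h₂ δ₂) :
    μ * ‖δ₁ - δ₂‖ ^ 2 ≤ ⟪δ₂ - δ₁, G₂ δ₁ - G₁ δ₁⟫ ∧
      ‖δ₁ - δ₂‖ ≤ (1 / μ) * ‖G₂ δ₁ - G₁ δ₁‖ := by
  have hG₁0 : G₁ δ₁ = 0 := gradient_eq_zero_of_max (hG₁ δ₁) hmax₁
  have hG₂0 : G₂ δ₂ = 0 := gradient_eq_zero_of_max (hG₂ δ₂) hmax₂
  -- gradients of the auxiliary function g = h₂ + (μ/2)‖·‖²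
  have hGg : ∀ δ, HasGradientAt (fun δ => h₂ δ + (μ / 2) * ‖δ‖ ^ 2) (G₂ δ + μ • δ) δ :=
    fun δ => hasGradientAt_add_half_sq μ (hG₂ δ)
  have hA := concave_tangent_le hconc₂ (hGg δ₁) δ₂
  have hB := concave_tangent_le hconc₂ (hGg δ₂) δ₁
  rw [hG₂0, zero_add] at hB
  -- add the two tangent inequalities
  have hsum : 0 ≤ ⟪G₂ δ₁ + μ • δ₁, δ₂ - δ₁⟫ + ⟪μ • δ₂, δ₁ - δ₂⟫ := by linarith
  have hexp : ⟪G₂ δ₁ + μ • δ₁, δ₂ - δ₁⟫ + ⟪μ • δ₂, δ₁ - δ₂⟫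
      = ⟪δ₂ - δ₁, G₂ δ₁⟫ - μ * ‖δ₁ - δ₂‖ ^ 2 := by
    rw [inner_add_left, real_inner_smul_left, real_inner_smul_left]
    have h1 : ⟪δ₂ - δ₁, G₂ δ₁⟫ = ⟪G₂ δ₁, δ₂ - δ₁⟫ := real_inner_comm _ _
    have h2 : (⟪δ₁, δ₂ - δ₁⟫ - ⟪δ₂, δ₂ - δ₁⟫ : ℝ) = -‖δ₁ - δ₂‖ ^ 2 := by
      rw [← inner_sub_left, ← neg_sub δ₂ δ₁, inner_neg_left, real_inner_self_eq_norm_sq,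
        norm_neg]
    have h3 : ⟪δ₂, δ₁ - δ₂⟫ = -⟪δ₂, δ₂ - δ₁⟫ := by
      rw [← inner_neg_right, neg_sub]
    rw [h1, h3]
    nlinarith [h2]
  have hmain : μ * ‖δ₁ - δ₂‖ ^ 2 ≤ ⟪δ₂ - δ₁, G₂ δ₁⟫ := by
    rw [hexp] at hsum; linarith
  have hkey : μ * ‖δ₁ - δ₂‖ ^ 2 ≤ ⟪δ₂ - δ₁, G₂ δ₁ - G₁ δ₁⟫ := by
    rwa [hG₁0, sub_zero]
  refine ⟨hkey, ?_⟩
  have hcs : ⟪δ₂ - δ₁, G₂ δ₁ - G₁ δ₁⟫ ≤ ‖δ₂ - δ₁‖ * ‖G₂ δ₁ - G₁ δ₁‖ :=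
    real_inner_le_norm _ _
  have hnorm : ‖δ₂ - δ₁‖ = ‖δ₁ - δ₂‖ := norm_sub_rev _ _
  rcases eq_or_lt_of_le (norm_nonneg (δ₁ - δ₂)) with h0 | h0
  · rw [← h0]
    positivity
  · rw [hnorm] at hcs
    have : μ * ‖δ₁ - δ₂‖ ^ 2 ≤ ‖δ₁ - δ₂‖ * ‖G₂ δ₁ - G₁ δ₁‖ := le_trans hkey hcs
    rw [one_div, ← div_eq_inv_mul, le_div_iff₀ hμ]
    nlinarith
end

section
/- (Proximal operator of the ℓ_{1,2} group norm.) Let A be an m × d real matrix and ξ > 0. The function B ↦ ξ‖B‖_{1,2} + (1/2)‖A − B‖²_F over m × d real matrices has a unique minimizer B̂ given columnwise by B̂_{:,j} = ( max{‖A_{:,j}‖₂ − ξ, 0} / ‖A_{:,j}‖₂ ) · A_{:,j} when A_{:,j} ≠ 0, and B̂_{:,j} = 0 when A_{:,j} = 0, for each column index j = 1, …, d. -/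
set_option maxHeartbeats 1000000

private lemma col_key (m : ℕ) (ξ : ℝ) (hξ : 0 < ξ) (a b bh : Fin m → ℝ)
    (hne : a ≠ (0 : Fin m → ℝ) → ∀ i,
      bh i = (max (Real.sqrt (∑ i', a i' ^ 2) - ξ) 0 / Real.sqrt (∑ i', a i' ^ 2)) * a i)
    (hz : a = (0 : Fin m → ℝ) → ∀ i, bh i = 0) :
    (ξ * Real.sqrt (∑ i, bh i ^ 2) + (1/2) * ∑ i, (a i - bh i) ^ 2 ≤
      ξ * Real.sqrt (∑ i, b i ^ 2) + (1/2) * ∑ i, (a i - b i) ^ 2) ∧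
    (b ≠ bh → ξ * Real.sqrt (∑ i, bh i ^ 2) + (1/2) * ∑ i, (a i - bh i) ^ 2 <
      ξ * Real.sqrt (∑ i, b i ^ 2) + (1/2) * ∑ i, (a i - b i) ^ 2) := by
  set r := Real.sqrt (∑ i', a i' ^ 2) with hrdef
  set s := Real.sqrt (∑ i, b i ^ 2) with hsdef
  have hr0 : 0 ≤ r := Real.sqrt_nonneg _
  have hs0 : 0 ≤ s := Real.sqrt_nonneg _
  have hr2 : r ^ 2 = ∑ i, a i ^ 2 := Real.sq_sqrt (by positivity)
  have hs2 : s ^ 2 = ∑ i, b i ^ 2 := Real.sq_sqrt (by positivity)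
  have hcs : ∑ i, a i * b i ≤ r * s := Real.sum_mul_le_sqrt_mul_sqrt _ _ _
  have hexp : ∀ c : Fin m → ℝ, ∑ i, (a i - c i) ^ 2
      = (∑ i, a i ^ 2) - 2 * (∑ i, a i * c i) + ∑ i, c i ^ 2 := by
    intro c
    rw [Finset.mul_sum, ← Finset.sum_sub_distrib, ← Finset.sum_add_distrib]
    exact Finset.sum_congr rfl fun i _ => by ring
  by_cases ha : a = (0 : Fin m → ℝ)
  · -- zero column
    have hbh : ∀ i, bh i = 0 := hz ha
    have hbh0 : (∑ i, bh i ^ 2) = 0 := by simp [hbh]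
    have ha0 : ∀ i, a i = 0 := fun i => congrFun ha i
    have h1 : ξ * Real.sqrt (∑ i, bh i ^ 2) + (1/2) * ∑ i, (a i - bh i) ^ 2 = 0 := by
      simp [hbh0, hbh, ha0]
    have h2 : ∑ i, (a i - b i) ^ 2 = s ^ 2 := by
      rw [hs2]; exact Finset.sum_congr rfl fun i _ => by rw [ha0 i]; ring
    constructor
    · rw [h1, h2]; positivity
    · intro hb
      have hs_pos : 0 < s := by
        rcases hs0.lt_or_eq with h | h
        · exact h
        · exfalso
          have : ∑ i, b i ^ 2 = 0 := by rw [← hs2, ← h]; ring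
          have hbz : ∀ i ∈ Finset.univ, b i ^ 2 = 0 :=
            (Finset.sum_eq_zero_iff_of_nonneg (fun i _ => sq_nonneg _)).1 this
          exact hb (funext fun i => by
            have := pow_eq_zero_iff (n := 2) (by norm_num) |>.1 (hbz i (Finset.mem_univ i))
            rw [this, hbh i])
      rw [h1, h2]; nlinarith
  · -- nonzero column
    have hbh : ∀ i, bh i = (max (r - ξ) 0 / r) * a i := hne ha
    set t := max (r - ξ) 0 with htdef
    have ht0 : 0 ≤ t := le_max_right _ _
    have hrpos : 0 < r := by
      rcases hr0.lt_or_eq with h | h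
      · exact h
      · exfalso
        have h2 : ∑ i, a i ^ 2 = 0 := by rw [← hr2, ← h]; ring
        have haz : ∀ i ∈ Finset.univ, a i ^ 2 = 0 :=
          (Finset.sum_eq_zero_iff_of_nonneg (fun i _ => sq_nonneg _)).1 h2
        exact ha (funext fun i =>
          pow_eq_zero_iff (n := 2) (by norm_num) |>.1 (haz i (Finset.mem_univ i)))
    have hrne : r ≠ 0 := ne_of_gt hrpos
    have hsum1 : ∑ i, bh i ^ 2 = t ^ 2 := by
      have : ∑ i, bh i ^ 2 = (t / r) ^ 2 * ∑ i, a i ^ 2 := by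
        rw [Finset.mul_sum]; exact Finset.sum_congr rfl fun i _ => by rw [hbh i]; ring
      rw [this, ← hr2]; field_simp
    have hsqrt1 : Real.sqrt (∑ i, bh i ^ 2) = t := by rw [hsum1, Real.sqrt_sq ht0]
    have hsum2 : ∑ i, (a i - bh i) ^ 2 = (r - t) ^ 2 := by
      have : ∑ i, (a i - bh i) ^ 2 = ((r - t) / r) ^ 2 * ∑ i, a i ^ 2 := by
        rw [Finset.mul_sum]; exact Finset.sum_congr rfl fun i _ => by rw [hbh i]; field_simp
      rw [this, ← hr2]; field_simp
    have hFb : ξ * s + (1/2) * ∑ i, (a i - b i) ^ 2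
        = ξ * s + (1/2) * (r ^ 2 - 2 * (∑ i, a i * b i) + s ^ 2) := by
      rw [hexp b, hr2, hs2]
    -- main inequality with slack
    have hmain : ξ * t + (1/2) * (r - t) ^ 2 + ((r * s - ∑ i, a i * b i) + (1/2) * (s - t) ^ 2)
        ≤ ξ * s + (1/2) * (r ^ 2 - 2 * (∑ i, a i * b i) + s ^ 2) := by
      rcases max_cases (r - ξ) 0 with ⟨h1, h2⟩ | ⟨h1, h2⟩ <;> rw [htdef, h1] <;> nlinarith
    have hslack0 : 0 ≤ (r * s - ∑ i, a i * b i) + (1/2) * (s - t) ^ 2 := by nlinarith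
    constructor
    · rw [hsqrt1, hsum2, hFb]; linarith
    · intro hb
      rw [hsqrt1, hsum2, hFb]
      have hslack : 0 < (r * s - ∑ i, a i * b i) + (1/2) * (s - t) ^ 2 := by
        rcases hslack0.lt_or_eq with h | h
        · exact h
        · exfalso
          have h1 : 0 ≤ r * s - ∑ i, a i * b i := by linarith
          have h2 : (0:ℝ) ≤ (1/2) * (s - t) ^ 2 := by positivity
          have hab : ∑ i, a i * b i = r * s := by linarith
          have hst : s = t := by
            have : (s - t) ^ 2 = 0 := by linarith
            have := pow_eq_zero_iff (n := 2) (by norm_num) |>.1 this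
            linarith
          apply hb
          rcases ht0.lt_or_eq with htpos | ht0'
          · -- t > 0 : equality in Cauchy-Schwarz
            have hzero : ∑ i, (s * a i - r * b i) ^ 2 = 0 := by
              have : ∑ i, (s * a i - r * b i) ^ 2
                  = s ^ 2 * (∑ i, a i ^ 2) - 2 * s * r * (∑ i, a i * b i)
                    + r ^ 2 * (∑ i, b i ^ 2) := by
                rw [Finset.mul_sum, Finset.mul_sum, Finset.mul_sum, ← Finset.sum_sub_distrib,
                  ← Finset.sum_add_distrib]
                exact Finset.sum_congr rfl fun i _ => by ring
              rw [this, ← hr2, ← hs2, hab]; ring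
            have hz' : ∀ i ∈ Finset.univ, (s * a i - r * b i) ^ 2 = 0 :=
              (Finset.sum_eq_zero_iff_of_nonneg (fun i _ => sq_nonneg _)).1 hzero
            funext i
            have := pow_eq_zero_iff (n := 2) (by norm_num) |>.1 (hz' i (Finset.mem_univ i))
            have hbi : b i = (s / r) * a i := by
              field_simp
              linarith [this]
            rw [hbi, hbh i, hst]
          · -- t = 0 : s = 0 so b = 0 = bh
            have hs0' : s = 0 := by rw [hst, ← ht0']
            have : ∑ i, b i ^ 2 = 0 := by rw [← hs2, hs0']; ring
            have hbz : ∀ i ∈ Finset.univ, b i ^ 2 = 0 :=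
              (Finset.sum_eq_zero_iff_of_nonneg (fun i _ => sq_nonneg _)).1 this
            funext i
            rw [pow_eq_zero_iff (n := 2) (by norm_num) |>.1 (hbz i (Finset.mem_univ i)),
              hbh i, ← ht0']
            ring
      linarith

/-- **Proximal operator of the `ℓ_{1,2}` group norm.** For an `m × d` matrix `A` and `ξ > 0`,
the function `B ↦ ξ‖B‖_{1,2} + (1/2)‖A − B‖²_F` (where `‖B‖_{1,2} = Σⱼ ‖B_{:,j}‖₂`) has a
unique minimizer `B̂` obtained by columnwise block soft-thresholding:
`B̂_{:,j} = (max{‖A_{:,j}‖₂ − ξ, 0}/‖A_{:,j}‖₂)·A_{:,j}` if `A_{:,j} ≠ 0`, else `0`. -/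
theorem stmt10 (m d : ℕ) (A : Matrix (Fin m) (Fin d) ℝ) (ξ : ℝ) (hξ : 0 < ξ)
    (Bhat : Matrix (Fin m) (Fin d) ℝ)
    (hBhat_ne : ∀ j : Fin d, (fun i => A i j) ≠ (0 : Fin m → ℝ) → ∀ i,
      Bhat i j =
        (max (Real.sqrt (∑ i', A i' j ^ 2) - ξ) 0 / Real.sqrt (∑ i', A i' j ^ 2)) * A i j)
    (hBhat_zero : ∀ j : Fin d, (fun i => A i j) = (0 : Fin m → ℝ) → ∀ i, Bhat i j = 0) :
    (∀ B : Matrix (Fin m) (Fin d) ℝ,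
        ξ * (∑ j, Real.sqrt (∑ i, Bhat i j ^ 2))
            + (1 / 2) * ∑ i, ∑ j, (A i j - Bhat i j) ^ 2 ≤
          ξ * (∑ j, Real.sqrt (∑ i, B i j ^ 2))
            + (1 / 2) * ∑ i, ∑ j, (A i j - B i j) ^ 2) ∧
      ∀ B : Matrix (Fin m) (Fin d) ℝ, B ≠ Bhat →
        ξ * (∑ j, Real.sqrt (∑ i, Bhat i j ^ 2))
            + (1 / 2) * ∑ i, ∑ j, (A i j - Bhat i j) ^ 2 <
          ξ * (∑ j, Real.sqrt (∑ i, B i j ^ 2))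
            + (1 / 2) * ∑ i, ∑ j, (A i j - B i j) ^ 2 := by
  have hcol := fun (B : Matrix (Fin m) (Fin d) ℝ) (j : Fin d) =>
    col_key m ξ hξ (fun i => A i j) (fun i => B i j) (fun i => Bhat i j)
      (hBhat_ne j) (hBhat_zero j)
  have hobj : ∀ C : Matrix (Fin m) (Fin d) ℝ,
      ξ * (∑ j, Real.sqrt (∑ i, C i j ^ 2)) + (1 / 2) * ∑ i, ∑ j, (A i j - C i j) ^ 2
      = ∑ j, (ξ * Real.sqrt (∑ i, C i j ^ 2) + (1 / 2) * ∑ i, (A i j - C i j) ^ 2) := by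
    intro C
    rw [Finset.sum_comm, Finset.sum_add_distrib, ← Finset.mul_sum, ← Finset.mul_sum]
  constructor
  · intro B
    rw [hobj Bhat, hobj B]
    exact Finset.sum_le_sum fun j _ => (hcol B j).1
  · intro B hB
    rw [hobj Bhat, hobj B]
    have hex : ∃ j, (fun i => B i j) ≠ (fun i => Bhat i j) := by
      by_contra h
      push_neg at h
      exact hB (Matrix.ext fun i j => congrFun (h j) i)
    obtain ⟨j0, hj0⟩ := hex
    exact Finset.sum_lt_sum (fun j _ => (hcol B j).1)
      ⟨j0, Finset.mem_univ _, (hcol B j0).2 hj0⟩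
end

section
/- (Proximal operator of the nuclear norm / singular value thresholding.) Let A be an m × d real matrix with singular value decomposition A = U S Vᵀ, where U is an m × m orthogonal matrix, V is a d × d orthogonal matrix, and S is an m × d matrix whose off-diagonal entries vanish and whose diagonal entries σ₁, …, σ_{min(m,d)} are nonnegative. Let ξ > 0 and let S_ξ be the m × d matrix obtained from S by replacing each diagonal entry σ_i with max{σ_i − ξ, 0}. Then B̂ := U S_ξ Vᵀ is the unique minimizer over m × d real matrices B of ξ‖B‖_* + (1/2)‖A − B‖²_F. -/
open Matrix

/-- The nuclear norm of a real `m × d` matrix: the trace of the positive semidefinite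
square root of `Bᵀ B` (i.e. the sum of the singular values of `B`). -/
noncomputable def nuclearNorm {m d : ℕ} (B : Matrix (Fin m) (Fin d) ℝ) : ℝ :=
  ((((Matrix.posSemidef_conjTranspose_mul_self B).1.eigenvectorUnitary : Matrix (Fin d) (Fin d) ℝ) *
    diagonal (fun i => Real.sqrt ((Matrix.posSemidef_conjTranspose_mul_self B).1.eigenvalues i)) *
    star ((Matrix.posSemidef_conjTranspose_mul_self B).1.eigenvectorUnitary : Matrix (Fin d) (Fin d) ℝ))).trace

open scoped MatrixOrder

lemma my_nn_eq {m d : ℕ} (B : Matrix (Fin m) (Fin d) ℝ) :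
    nuclearNorm B = (CFC.sqrt (Bᴴ * B)).trace := by
  have hA := Matrix.posSemidef_conjTranspose_mul_self B
  rw [CFC.sqrt_eq_cfc, cfc_nnreal_eq_real _ (Bᴴ * B), hA.1.cfc_eq]
  unfold nuclearNorm
  have h : ∀ i, max (hA.1.eigenvalues i) 0 = hA.1.eigenvalues i :=
    fun i => max_eq_left (hA.eigenvalues_nonneg i)
  simp only [IsHermitian.cfc, Unitary.conjStarAlgAut_apply, Function.comp_def, Real.coe_sqrt,
    Real.coe_toNNReal', RCLike.ofReal_real_eq_id, id, h]

lemma my_sum_ite_cast {m : ℕ} (n : ℕ) (f : Fin m → ℝ) :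
    ∑ i : Fin m, (if (i : ℕ) = n then f i else 0) = if h : n < m then f ⟨n, h⟩ else 0 := by
  by_cases h : n < m
  · rw [dif_pos h, Finset.sum_eq_single ⟨n, h⟩]
    · simp
    · intro b _ hb
      rw [if_neg]; intro hc; exact hb (Fin.ext hc)
    · simp
  · rw [dif_neg h, Finset.sum_eq_zero]
    intro i _
    rw [if_neg]; intro hc; exact h (hc ▸ i.isLt)

lemma my_sum_ite_cast' {m : ℕ} (n : ℕ) (f : Fin m → ℝ) :
    ∑ i : Fin m, (if n = (i : ℕ) then f i else 0) = if h : n < m then f ⟨n, h⟩ else 0 := by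
  rw [← my_sum_ite_cast n f]
  congr 1; ext i; simp [eq_comm]

lemma my_scalar_lt {ξ σ c : ℝ} (hξ : 0 < ξ) (hσ : 0 ≤ σ) (hc : c ≠ max (σ - ξ) 0) :
    ξ * max (σ - ξ) 0 + (σ - max (σ - ξ) 0) ^ 2 / 2 < ξ * |c| + (σ - c) ^ 2 / 2 := by
  rcases le_or_gt σ ξ with h | h
  · rw [max_eq_right (by linarith)] at *
    have habs : 0 < |c| := abs_pos.mpr hc
    rcases abs_cases c with ⟨hc1, hc2⟩ | ⟨hc1, hc2⟩ <;>
      nlinarith [sq_nonneg c, sq_nonneg (σ - c), mul_pos hξ habs]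
  · rw [max_eq_left (by linarith)] at *
    have hne : c - (σ - ξ) ≠ 0 := sub_ne_zero.mpr hc
    have hsq : 0 < (c - (σ - ξ)) ^ 2 := by positivity
    rcases abs_cases c with ⟨hc1, hc2⟩ | ⟨hc1, hc2⟩
    · nlinarith [hsq]
    · nlinarith [hsq, mul_pos hξ (neg_pos.mpr hc2)]

lemma my_diag_abs_sum_le {m d : ℕ} (C : Matrix (Fin m) (Fin d) ℝ) :
    ∑ i : Fin m, ∑ j : Fin d, (if (i : ℕ) = (j : ℕ) then |C i j| else 0) ≤ nuclearNorm C := by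
  have hH : (Cᴴ * C).IsHermitian := (Matrix.posSemidef_conjTranspose_mul_self C).1
  set ev : Fin d → ℝ := hH.eigenvalues with hev
  have hevnn : ∀ k, 0 ≤ ev k := fun k =>
    (Matrix.posSemidef_conjTranspose_mul_self C).eigenvalues_nonneg k
  set W : Matrix (Fin d) (Fin d) ℝ := (hH.eigenvectorUnitary : Matrix (Fin d) (Fin d) ℝ) with hW
  have hWW : Wᴴ * W = 1 := by
    have := hH.eigenvectorUnitary.2
    rw [Matrix.mem_unitaryGroup_iff'] at this
    simpa [Matrix.star_eq_conjTranspose, hW] using this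
  have hWW' : W * Wᴴ = 1 := by
    have := hH.eigenvectorUnitary.2
    rw [Matrix.mem_unitaryGroup_iff] at this
    simpa [Matrix.star_eq_conjTranspose, hW] using this
  have hspec : Cᴴ * C = W * diagonal ev * Wᴴ := by
    have := hH.spectral_theorem
    simpa [Matrix.star_eq_conjTranspose, Function.comp, hW, hev] using this
  have htrace : nuclearNorm C = ∑ k, Real.sqrt (ev k) := by
    unfold nuclearNorm
    rw [Matrix.trace_mul_cycle]
    rw [Matrix.star_eq_conjTranspose]
    show Matrix.trace ((Wᴴ) * W * _) = _
    rw [hWW, Matrix.one_mul, Matrix.trace_diagonal]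
  have hcw : (C * W)ᴴ * (C * W) = diagonal ev := by
    rw [Matrix.conjTranspose_mul, Matrix.mul_assoc, ← Matrix.mul_assoc Cᴴ C W,
      hspec]
    calc Wᴴ * (W * diagonal ev * Wᴴ * W) = (Wᴴ * W) * diagonal ev * (Wᴴ * W) := by
          simp only [Matrix.mul_assoc]
      _ = diagonal ev := by rw [hWW]; simp
  have hCol : ∀ k, ∑ i, ((C * W) i k) ^ 2 = ev k := by
    intro k
    have := congrFun (congrFun hcw k) k
    rw [Matrix.mul_apply, Matrix.diagonal_apply_eq] at this
    simpa [Matrix.conjTranspose_apply, sq] using this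
  have hColW : ∀ k, ∑ j, (W j k) ^ 2 = 1 := by
    intro k
    have := congrFun (congrFun hWW k) k
    rw [Matrix.mul_apply] at this
    simp only [Matrix.one_apply_eq] at this
    simpa [Matrix.conjTranspose_apply, sq] using this
  have hEntry : ∀ i j, C i j = ∑ k, (C * W) i k * W j k := by
    intro i j
    have hC : C = C * W * Wᴴ := by rw [Matrix.mul_assoc, hWW', Matrix.mul_one]
    conv_lhs => rw [hC]
    rw [Matrix.mul_apply]
    simp [Matrix.conjTranspose_apply]
  rw [htrace]
  have key : ∀ k, (∑ p : Fin m × Fin d,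
      if (p.1 : ℕ) = (p.2 : ℕ) then |(C * W) p.1 k| * |W p.2 k| else 0) ≤ Real.sqrt (ev k) := by
    intro k
    set f : Fin m × Fin d → ℝ := fun p => if (p.1 : ℕ) = (p.2 : ℕ) then |(C * W) p.1 k| else 0
      with hf
    set g : Fin m × Fin d → ℝ := fun p => if (p.1 : ℕ) = (p.2 : ℕ) then |W p.2 k| else 0 with hg
    have hfg : ∀ p : Fin m × Fin d,
        (if (p.1 : ℕ) = (p.2 : ℕ) then |(C * W) p.1 k| * |W p.2 k| else 0) = f p * g p := by
      intro p; by_cases h : (p.1 : ℕ) = (p.2 : ℕ) <;> simp [hf, hg, h]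
    have hf2 : ∑ p : Fin m × Fin d, f p ^ 2 ≤ ev k := by
      rw [← hCol k, Fintype.sum_prod_type]
      apply Finset.sum_le_sum
      intro i _
      have : ∀ j : Fin d, f (i, j) ^ 2 = if (i : ℕ) = (j : ℕ) then ((C * W) i k) ^ 2 else 0 := by
        intro j; by_cases h : (i : ℕ) = (j : ℕ) <;> simp [hf, h, sq_abs]
      rw [Finset.sum_congr rfl fun j _ => this j, my_sum_ite_cast' (i : ℕ)
        (fun j : Fin d => ((C * W) i k) ^ 2)]
      split
      · exact le_refl _
      · positivity
    have hg2 : ∑ p : Fin m × Fin d, g p ^ 2 ≤ 1 := by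
      rw [← hColW k, Fintype.sum_prod_type_right]
      apply Finset.sum_le_sum
      intro j _
      have : ∀ i : Fin m, g (i, j) ^ 2 = if (i : ℕ) = (j : ℕ) then (W j k) ^ 2 else 0 := by
        intro i; by_cases h : (i : ℕ) = (j : ℕ) <;> simp [hg, h, sq_abs]
      rw [Finset.sum_congr rfl fun i _ => this i, my_sum_ite_cast (j : ℕ)
        (fun _ : Fin m => (W j k) ^ 2)]
      split
      · exact le_refl _
      · positivity
    calc ∑ p : Fin m × Fin d, (if (p.1 : ℕ) = (p.2 : ℕ) then |(C * W) p.1 k| * |W p.2 k| else 0)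
        = ∑ p : Fin m × Fin d, f p * g p := Finset.sum_congr rfl fun p _ => hfg p
      _ ≤ Real.sqrt (∑ p, f p ^ 2) * Real.sqrt (∑ p, g p ^ 2) :=
          Real.sum_mul_le_sqrt_mul_sqrt _ _ _
      _ ≤ Real.sqrt (ev k) * Real.sqrt 1 := by
          apply mul_le_mul (Real.sqrt_le_sqrt hf2) (Real.sqrt_le_sqrt hg2)
            (Real.sqrt_nonneg _) (Real.sqrt_nonneg _)
      _ = Real.sqrt (ev k) := by rw [Real.sqrt_one, mul_one]
  calc ∑ i : Fin m, ∑ j : Fin d, (if (i : ℕ) = (j : ℕ) then |C i j| else 0)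
      ≤ ∑ i : Fin m, ∑ j : Fin d,
          (if (i : ℕ) = (j : ℕ) then ∑ k, |(C * W) i k| * |W j k| else 0) := by
        apply Finset.sum_le_sum; intro i _; apply Finset.sum_le_sum; intro j _
        by_cases h : (i : ℕ) = (j : ℕ)
        · simp only [if_pos h]
          rw [hEntry i j]
          calc |∑ k, (C * W) i k * W j k| ≤ ∑ k, |(C * W) i k * W j k| :=
                Finset.abs_sum_le_sum_abs _ _
            _ = ∑ k, |(C * W) i k| * |W j k| := by simp [abs_mul]
        · simp [h]
    _ = ∑ k, ∑ p : Fin m × Fin d,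
          (if (p.1 : ℕ) = (p.2 : ℕ) then |(C * W) p.1 k| * |W p.2 k| else 0) := by
        rw [← Fintype.sum_prod_type (f := fun p : Fin m × Fin d =>
          (if (p.1 : ℕ) = (p.2 : ℕ) then ∑ k, |(C * W) p.1 k| * |W p.2 k| else 0))]
        rw [Finset.sum_comm]
        apply Finset.sum_congr rfl
        intro p _
        by_cases h : (p.1 : ℕ) = (p.2 : ℕ) <;> simp [h]
    _ ≤ ∑ k, Real.sqrt (ev k) := Finset.sum_le_sum fun k _ => key k

lemma my_nuclearNorm_conj {m d : ℕ} (C : Matrix (Fin m) (Fin d) ℝ)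
    (U : Matrix (Fin m) (Fin m) ℝ) (V : Matrix (Fin d) (Fin d) ℝ)
    (hU : Uᴴ * U = 1) (hV : Vᴴ * V = 1) :
    nuclearNorm (U * C * Vᴴ) = nuclearNorm C := by
  have hM := Matrix.posSemidef_conjTranspose_mul_self C
  have hpsd : Matrix.PosSemidef (V * CFC.sqrt (Cᴴ * C) * Vᴴ) :=
    (CFC.sqrt_nonneg (Cᴴ * C)).posSemidef.mul_mul_conjTranspose_same V
  have hcan : ∀ (X : Matrix (Fin m) (Fin d) ℝ), Uᴴ * (U * X) = X := by
    intro X; rw [← Matrix.mul_assoc, hU, Matrix.one_mul]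
  have hcan' : ∀ (X : Matrix (Fin d) (Fin d) ℝ), Vᴴ * (V * X) = X := by
    intro X; rw [← Matrix.mul_assoc, hV, Matrix.one_mul]
  have hsq : (V * CFC.sqrt (Cᴴ * C) * Vᴴ) ^ 2 = (U * C * Vᴴ)ᴴ * (U * C * Vᴴ) := by
    rw [pow_two]
    simp only [Matrix.conjTranspose_mul, Matrix.conjTranspose_conjTranspose]
    calc V * CFC.sqrt (Cᴴ * C) * Vᴴ * (V * CFC.sqrt (Cᴴ * C) * Vᴴ)
        = V * (CFC.sqrt (Cᴴ * C) * (Vᴴ * (V * (CFC.sqrt (Cᴴ * C) * Vᴴ)))) := by simp only [Matrix.mul_assoc]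
      _ = V * (CFC.sqrt (Cᴴ * C) * (CFC.sqrt (Cᴴ * C) * Vᴴ)) := by rw [hcan']
      _ = V * ((Cᴴ * C) * Vᴴ) := by rw [← Matrix.mul_assoc (CFC.sqrt (Cᴴ * C)), CFC.sqrt_mul_sqrt_self _ hM.nonneg]
      _ = V * (Cᴴ * (Uᴴ * (U * (C * Vᴴ)))) := by
          rw [hcan (C * Vᴴ)]; simp only [Matrix.mul_assoc]
      _ = V * (Cᴴ * Uᴴ) * (U * C * Vᴴ) := by simp only [Matrix.mul_assoc]
  have hkey : CFC.sqrt ((U * C * Vᴴ)ᴴ * (U * C * Vᴴ))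
      = V * CFC.sqrt (Cᴴ * C) * Vᴴ :=
    (CFC.sqrt_eq_iff _ _ (Matrix.posSemidef_conjTranspose_mul_self (U * C * Vᴴ)).nonneg
      hpsd.nonneg).mpr ((pow_two _).symm.trans hsq)
  rw [my_nn_eq, my_nn_eq]
  rw [hkey, Matrix.trace_mul_cycle, hV, Matrix.one_mul]

lemma my_nuclearNorm_diaglike {m d : ℕ} (T : Matrix (Fin m) (Fin d) ℝ)
    (hoff : ∀ (i : Fin m) (j : Fin d), (i : ℕ) ≠ (j : ℕ) → T i j = 0)
    (hdiag : ∀ (i : Fin m) (j : Fin d), (i : ℕ) = (j : ℕ) → 0 ≤ T i j) :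
    nuclearNorm T = ∑ i : Fin m, ∑ j : Fin d, (if (i : ℕ) = (j : ℕ) then |T i j| else 0) := by
  set ψ : Fin d → ℝ := fun j => if h : (j : ℕ) < m then T ⟨j, h⟩ j else 0 with hψ
  have hψnn : ∀ j, 0 ≤ ψ j := by
    intro j; rw [hψ]; dsimp only
    split
    · exact hdiag _ _ rfl
    · exact le_refl 0
  have h1 : Tᴴ * T = diagonal (fun j => ψ j ^ 2) := by
    ext j j'
    rw [Matrix.mul_apply]
    simp only [Matrix.conjTranspose_apply, star_trivial]
    by_cases hjj : j = j'
    · subst hjj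
      rw [Matrix.diagonal_apply_eq]
      have : ∀ i : Fin m, T i j * T i j
          = if (i : ℕ) = (j : ℕ) then (fun i : Fin m => T i j * T i j) i else 0 := by
        intro i
        by_cases h : (i : ℕ) = (j : ℕ)
        · rw [if_pos h]
        · rw [if_neg h, hoff i j h, mul_zero]
      rw [Finset.sum_congr rfl fun i _ => this i, my_sum_ite_cast]
      rw [hψ]; dsimp only
      split
      · rw [sq]
      · simp
    · rw [Matrix.diagonal_apply_ne _ hjj, Finset.sum_eq_zero]
      intro i _
      by_cases h : (i : ℕ) = (j : ℕ)
      · have : (i : ℕ) ≠ (j' : ℕ) := by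
          rw [h]; intro hc; exact hjj (Fin.ext hc)
        rw [hoff i j' this, mul_zero]
      · rw [hoff i j h, zero_mul]
  have hpsd : Matrix.PosSemidef (diagonal ψ) :=
    Matrix.posSemidef_diagonal_iff.mpr fun j => hψnn j
  have hsq : (diagonal ψ) ^ 2 = Tᴴ * T := by
    rw [h1, pow_two, Matrix.diagonal_mul_diagonal]
    apply congrArg; funext j; rw [sq]
  have hkey : CFC.sqrt (Tᴴ * T) = diagonal ψ :=
    (CFC.sqrt_eq_iff _ _ (Matrix.posSemidef_conjTranspose_mul_self T).nonneg
      hpsd.nonneg).mpr ((pow_two _).symm.trans hsq)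
  rw [my_nn_eq]
  rw [hkey, Matrix.trace_diagonal, Finset.sum_comm]
  apply Finset.sum_congr rfl
  intro j _
  have : ∀ i : Fin m, (if (i : ℕ) = (j : ℕ) then |T i j| else 0)
      = if (i : ℕ) = (j : ℕ) then (fun i : Fin m => |T i j|) i else 0 := fun i => rfl
  rw [Finset.sum_congr rfl fun i _ => this i, my_sum_ite_cast]
  rw [hψ]; dsimp only
  split
  · exact (abs_of_nonneg (hdiag _ _ rfl)).symm
  · rfl

lemma my_fro_conj {m d : ℕ} (X : Matrix (Fin m) (Fin d) ℝ)
    (U : Matrix (Fin m) (Fin m) ℝ) (V : Matrix (Fin d) (Fin d) ℝ)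
    (hU : Uᴴ * U = 1) (hV : Vᴴ * V = 1) :
    ∑ i : Fin m, ∑ j : Fin d, ((U * X * Vᴴ) i j) ^ 2 = ∑ i : Fin m, ∑ j : Fin d, (X i j) ^ 2 := by
  have hcan : ∀ (Y : Matrix (Fin m) (Fin d) ℝ), Uᴴ * (U * Y) = Y := by
    intro Y; rw [← Matrix.mul_assoc, hU, Matrix.one_mul]
  have base : ∀ (Y : Matrix (Fin m) (Fin d) ℝ),
      Matrix.trace (Yᴴ * Y) = ∑ i : Fin m, ∑ j : Fin d, (Y i j) ^ 2 := by
    intro Y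
    rw [Matrix.trace]
    simp only [Matrix.diag_apply, Matrix.mul_apply, Matrix.conjTranspose_apply, star_trivial,
      ← sq]
    exact Finset.sum_comm
  have h2 : (U * X * Vᴴ)ᴴ * (U * X * Vᴴ) = V * (Xᴴ * X) * Vᴴ := by
    simp only [Matrix.conjTranspose_mul, Matrix.conjTranspose_conjTranspose]
    calc V * (Xᴴ * Uᴴ) * (U * X * Vᴴ) = V * (Xᴴ * (Uᴴ * (U * (X * Vᴴ)))) := by
          simp only [Matrix.mul_assoc]
      _ = V * (Xᴴ * (X * Vᴴ)) := by rw [hcan]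
      _ = V * (Xᴴ * X) * Vᴴ := by simp only [Matrix.mul_assoc]
  rw [← base, ← base, h2, Matrix.trace_mul_cycle, hV, Matrix.one_mul]

lemma my_core_lemma {m d : ℕ} (S Sξ : Matrix (Fin m) (Fin d) ℝ) (ξ : ℝ) (hξ : 0 < ξ)
    (hS_off : ∀ (i : Fin m) (j : Fin d), (i : ℕ) ≠ (j : ℕ) → S i j = 0)
    (hS_diag : ∀ (i : Fin m) (j : Fin d), (i : ℕ) = (j : ℕ) → 0 ≤ S i j)
    (hSξ : ∀ (i : Fin m) (j : Fin d),
      Sξ i j = if (i : ℕ) = (j : ℕ) then max (S i j - ξ) 0 else 0)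
    (C : Matrix (Fin m) (Fin d) ℝ) :
    (ξ * nuclearNorm Sξ + (1 / 2) * ∑ i : Fin m, ∑ j : Fin d, (S i j - Sξ i j) ^ 2 ≤
      ξ * nuclearNorm C + (1 / 2) * ∑ i : Fin m, ∑ j : Fin d, (S i j - C i j) ^ 2)
    ∧ (C ≠ Sξ →
      ξ * nuclearNorm Sξ + (1 / 2) * ∑ i : Fin m, ∑ j : Fin d, (S i j - Sξ i j) ^ 2 <
      ξ * nuclearNorm C + (1 / 2) * ∑ i : Fin m, ∑ j : Fin d, (S i j - C i j) ^ 2) := by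
  have hNSξ : nuclearNorm Sξ
      = ∑ i : Fin m, ∑ j : Fin d, (if (i : ℕ) = (j : ℕ) then |Sξ i j| else 0) := by
    apply my_nuclearNorm_diaglike
    · intro i j h; rw [hSξ i j, if_neg h]
    · intro i j h; rw [hSξ i j, if_pos h]; exact le_max_right _ _
  have hNC := fun C => my_diag_abs_sum_le (m := m) (d := d) C
  set φ : Fin m × Fin d → ℝ → ℝ := fun p x =>
    ξ * (if (p.1 : ℕ) = (p.2 : ℕ) then |x| else 0) + (S p.1 p.2 - x) ^ 2 / 2 with hφ
  have expand : ∀ X : Matrix (Fin m) (Fin d) ℝ,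
      ξ * (∑ i : Fin m, ∑ j : Fin d, (if (i : ℕ) = (j : ℕ) then |X i j| else 0))
        + (1 / 2) * ∑ i : Fin m, ∑ j : Fin d, (S i j - X i j) ^ 2
      = ∑ p : Fin m × Fin d, φ p (X p.1 p.2) := by
    intro X
    simp only [hφ, Fintype.sum_prod_type, Finset.mul_sum, ← Finset.sum_add_distrib]
    apply Finset.sum_congr rfl; intro i _
    apply Finset.sum_congr rfl; intro j _
    ring
  have hentry_lt : ∀ (i : Fin m) (j : Fin d) (c : ℝ), c ≠ Sξ i j →
      φ (i, j) (Sξ i j) < φ (i, j) c := by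
    intro i j c hc
    by_cases h : (i : ℕ) = (j : ℕ)
    · simp only [hφ, if_pos h]
      rw [hSξ i j, if_pos h] at hc ⊢
      rw [abs_of_nonneg (le_max_right _ _)]
      exact my_scalar_lt hξ (hS_diag i j h) hc
    · simp only [hφ, if_neg h]
      rw [hSξ i j, if_neg h] at hc ⊢
      rw [hS_off i j h]
      have : 0 < c ^ 2 := by positivity
      nlinarith
  have hentry_le : ∀ (p : Fin m × Fin d) (c : ℝ), φ p (Sξ p.1 p.2) ≤ φ p c := by
    intro p c
    by_cases hc : c = Sξ p.1 p.2
    · rw [hc]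
    · exact (hentry_lt p.1 p.2 c hc).le
  constructor
  · calc ξ * nuclearNorm Sξ + (1 / 2) * ∑ i : Fin m, ∑ j : Fin d, (S i j - Sξ i j) ^ 2
        = ∑ p : Fin m × Fin d, φ p (Sξ p.1 p.2) := by rw [hNSξ]; exact expand Sξ
      _ ≤ ∑ p : Fin m × Fin d, φ p (C p.1 p.2) :=
          Finset.sum_le_sum fun p _ => hentry_le p _
      _ = ξ * (∑ i : Fin m, ∑ j : Fin d, (if (i : ℕ) = (j : ℕ) then |C i j| else 0))
            + (1 / 2) * ∑ i : Fin m, ∑ j : Fin d, (S i j - C i j) ^ 2 := (expand C).symm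
      _ ≤ ξ * nuclearNorm C + (1 / 2) * ∑ i : Fin m, ∑ j : Fin d, (S i j - C i j) ^ 2 := by
          have := mul_le_mul_of_nonneg_left (hNC C) hξ.le
          linarith
  · intro hC
    obtain ⟨i, j, hij⟩ : ∃ i j, C i j ≠ Sξ i j := by
      by_contra h
      push_neg at h
      exact hC (Matrix.ext h)
    calc ξ * nuclearNorm Sξ + (1 / 2) * ∑ i : Fin m, ∑ j : Fin d, (S i j - Sξ i j) ^ 2
        = ∑ p : Fin m × Fin d, φ p (Sξ p.1 p.2) := by rw [hNSξ]; exact expand Sξ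
      _ < ∑ p : Fin m × Fin d, φ p (C p.1 p.2) :=
          Finset.sum_lt_sum (fun p _ => hentry_le p _)
            ⟨(i, j), Finset.mem_univ _, hentry_lt i j _ hij⟩
      _ = ξ * (∑ i : Fin m, ∑ j : Fin d, (if (i : ℕ) = (j : ℕ) then |C i j| else 0))
            + (1 / 2) * ∑ i : Fin m, ∑ j : Fin d, (S i j - C i j) ^ 2 := (expand C).symm
      _ ≤ ξ * nuclearNorm C + (1 / 2) * ∑ i : Fin m, ∑ j : Fin d, (S i j - C i j) ^ 2 := by
          have := mul_le_mul_of_nonneg_left (hNC C) hξ.le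
          linarith

/-- **Proximal operator of the nuclear norm (singular value thresholding).** Let
`A = U S Vᵀ` be a singular value decomposition (`U, V` orthogonal, `S` with vanishing
off-diagonal entries and nonnegative diagonal entries), let `ξ > 0`, and let `S_ξ` be `S`
with each diagonal entry `σ` replaced by `max{σ − ξ, 0}`. Then `B̂ := U S_ξ Vᵀ` is the
unique minimizer of `B ↦ ξ‖B‖_* + (1/2)‖A − B‖²_F`. -/
theorem stmt12 (m d : ℕ) (A : Matrix (Fin m) (Fin d) ℝ)
    (U : Matrix (Fin m) (Fin m) ℝ) (V : Matrix (Fin d) (Fin d) ℝ)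
    (S : Matrix (Fin m) (Fin d) ℝ)
    (hU : Uᵀ * U = 1) (hV : Vᵀ * V = 1)
    (hS_off : ∀ (i : Fin m) (j : Fin d), (i : ℕ) ≠ (j : ℕ) → S i j = 0)
    (hS_diag : ∀ (i : Fin m) (j : Fin d), (i : ℕ) = (j : ℕ) → 0 ≤ S i j)
    (hA : A = U * S * Vᵀ)
    (ξ : ℝ) (hξ : 0 < ξ)
    (Sξ : Matrix (Fin m) (Fin d) ℝ)
    (hSξ : ∀ (i : Fin m) (j : Fin d),
      Sξ i j = if (i : ℕ) = (j : ℕ) then max (S i j - ξ) 0 else 0)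
    (Bhat : Matrix (Fin m) (Fin d) ℝ) (hBhat : Bhat = U * Sξ * Vᵀ) :
    (∀ B : Matrix (Fin m) (Fin d) ℝ,
        ξ * nuclearNorm Bhat + (1 / 2) * ∑ i, ∑ j, (A i j - Bhat i j) ^ 2 ≤
          ξ * nuclearNorm B + (1 / 2) * ∑ i, ∑ j, (A i j - B i j) ^ 2) ∧
      ∀ B : Matrix (Fin m) (Fin d) ℝ, B ≠ Bhat →
        ξ * nuclearNorm Bhat + (1 / 2) * ∑ i, ∑ j, (A i j - Bhat i j) ^ 2 <
          ξ * nuclearNorm B + (1 / 2) * ∑ i, ∑ j, (A i j - B i j) ^ 2 := by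
  rw [← Matrix.conjTranspose_eq_transpose_of_trivial U] at hU
  rw [← Matrix.conjTranspose_eq_transpose_of_trivial V] at hV hA hBhat
  have hUU : U * Uᴴ = 1 := mul_eq_one_comm.mp hU
  have hVV : V * Vᴴ = 1 := mul_eq_one_comm.mp hV
  -- change of variables
  have hdec : ∀ B : Matrix (Fin m) (Fin d) ℝ, B = U * (Uᴴ * B * V) * Vᴴ := by
    intro B
    have h1 : U * (Uᴴ * B * V) * Vᴴ = (U * Uᴴ) * (B * (V * Vᴴ)) := by
      simp only [Matrix.mul_assoc]
    rw [h1, hUU, hVV, Matrix.one_mul, Matrix.mul_one]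
  have hobj : ∀ B : Matrix (Fin m) (Fin d) ℝ,
      ξ * nuclearNorm B + (1 / 2) * ∑ i, ∑ j, (A i j - B i j) ^ 2
      = ξ * nuclearNorm (Uᴴ * B * V)
        + (1 / 2) * ∑ i : Fin m, ∑ j : Fin d, (S i j - (Uᴴ * B * V) i j) ^ 2 := by
    intro B
    set C := Uᴴ * B * V with hC
    have h1 : nuclearNorm B = nuclearNorm C := by
      conv_lhs => rw [hdec B]
      exact my_nuclearNorm_conj C U V hU hV
    have hAB : A - B = U * (S - C) * Vᴴ := by
      rw [Matrix.mul_sub, Matrix.sub_mul, hA]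
      rw [← hdec B]
    have h2 : ∑ i, ∑ j, (A i j - B i j) ^ 2
        = ∑ i : Fin m, ∑ j : Fin d, (S i j - C i j) ^ 2 := by
      calc ∑ i, ∑ j, (A i j - B i j) ^ 2
          = ∑ i : Fin m, ∑ j : Fin d, ((U * (S - C) * Vᴴ) i j) ^ 2 := by
            apply Finset.sum_congr rfl; intro i _
            apply Finset.sum_congr rfl; intro j _
            rw [← hAB, Matrix.sub_apply]
        _ = ∑ i : Fin m, ∑ j : Fin d, ((S - C) i j) ^ 2 := my_fro_conj (S - C) U V hU hV
        _ = ∑ i : Fin m, ∑ j : Fin d, (S i j - C i j) ^ 2 := by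
            apply Finset.sum_congr rfl; intro i _
            apply Finset.sum_congr rfl; intro j _
            rw [Matrix.sub_apply]
    rw [h1, h2]
  have hChat : Uᴴ * Bhat * V = Sξ := by
    rw [hBhat]
    calc Uᴴ * (U * Sξ * Vᴴ) * V = (Uᴴ * U) * Sξ * (Vᴴ * V) := by simp only [Matrix.mul_assoc]
      _ = Sξ := by rw [hU, hV, Matrix.one_mul, Matrix.mul_one]
  have hobjhat : ξ * nuclearNorm Bhat + (1 / 2) * ∑ i, ∑ j, (A i j - Bhat i j) ^ 2
      = ξ * nuclearNorm Sξ + (1 / 2) * ∑ i : Fin m, ∑ j : Fin d, (S i j - Sξ i j) ^ 2 := by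
    rw [hobj Bhat, hChat]
  constructor
  · intro B
    rw [hobjhat, hobj B]
    exact (my_core_lemma S Sξ ξ hξ hS_off hS_diag hSξ (Uᴴ * B * V)).1
  · intro B hB
    rw [hobjhat, hobj B]
    apply (my_core_lemma S Sξ ξ hξ hS_off hS_diag hSξ (Uᴴ * B * V)).2
    intro hc
    apply hB
    rw [hdec B, hc, ← hBhat]
end
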